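/- arXiv:1103.0479 — 6 statements merged into one kernel-verified Lean document; each statement's English description precedes it below -/
import Mathlib

section
/- If (a,c) is a non-adjacent domination pair in a finite simple graph Γ, the vertex c is not isolated, and no vertex adjacent to c dominates c, then there exist vertices b and d such that (a,b,c,d) is a domination diamond: a,b,c,d are pairwise distinct, a~b, b~c, c~d, d~a, a is not adjacent to c, b is not adjacent to d, and a dominates c. -/
/-- If `(a, c)` is a non-adjacent domination pair, `c` is not isolated, and no vertex
adjacent to `c` dominates `c`, then there is a domination diamond `(a, b, c, d)`. -/
theorem exists_domination_diamond {V : Type*} [Fintype V] (G : SimpleGraph V) (a c : V)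
    (hac : a ≠ c) (hnadj : ¬ G.Adj a c)
    (hdom : ∀ e, G.Adj e c → G.Adj e a ∨ e = a)
    (hnotiso : ∃ e, G.Adj c e)
    (hnoadjdom : ∀ e, G.Adj e c → ¬ (∀ f, G.Adj f c → G.Adj f e ∨ f = e)) :
    ∃ b d : V, a ≠ b ∧ a ≠ d ∧ b ≠ c ∧ b ≠ d ∧ c ≠ d ∧
      G.Adj a b ∧ G.Adj b c ∧ G.Adj c d ∧ G.Adj d a ∧
      ¬ G.Adj a c ∧ ¬ G.Adj b d ∧ (∀ e, G.Adj e c → G.Adj e a ∨ e = a) := by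
  obtain ⟨b, hcb⟩ := hnotiso
  have hbc : G.Adj b c := hcb.symm
  have hne := hnoadjdom b hbc
  push_neg at hne
  obtain ⟨d, hdc, hndb, hdb⟩ := hne
  have hba : b ≠ a := by rintro rfl; exact hnadj hbc
  have hab : G.Adj b a := (hdom b hbc).resolve_right hba
  have hda : d ≠ a := by rintro rfl; exact hnadj hdc
  have had : G.Adj d a := (hdom d hdc).resolve_right hda
  refine ⟨b, d, fun h => hba h.symm, ?_, ?_, ?_, ?_, hab.symm, hbc, hdc.symm, had,
    hnadj, ?_, hdom⟩
  · exact fun h => hda h.symm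
  · exact hbc.ne
  · exact fun h => hdb h.symm
  · exact fun h => hdc.ne' h
  · exact fun h => hndb h.symm
end

section
/- In the Erdős–Rényi random graph G(n,p) with n ≥ 4, the expected number of ordered domination diamonds (a,b,c,d) is n(n−1)(n−2)(n−3) · p⁴(1−p)²(p+(1−p)²)^{n−4}. -/
open Finset

section Indep
variable {ι : Type*} [Fintype ι] [DecidableEq ι]

/-- product weight of an edge-configuration -/
def Wt (w : ι → Bool → ℝ) (f : ι → Bool) : ℝ := ∏ i, w i (f i)

lemma sum_prod_bool (F : ι → Bool → ℝ) :
    ∑ f : ι → Bool, ∏ i, F i (f i) = ∏ i, (F i true + F i false) := by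
  rw [← Fintype.prod_sum]
  exact Finset.prod_congr rfl fun i _ => by simp [Fintype.sum_bool]

lemma Wt_total (w : ι → Bool → ℝ) (hw : ∀ i, w i true + w i false = 1) :
    ∑ f : ι → Bool, Wt w f = 1 := by
  simp [Wt, sum_prod_bool, hw]

lemma Wt_cylinder (w : ι → Bool → ℝ) (hw : ∀ i, w i true + w i false = 1)
    (S : Finset ι) (σ : ι → Bool) :
    ∑ f : ι → Bool, Wt w f * (if ∀ i ∈ S, f i = σ i then 1 else 0)
      = ∏ i ∈ S, w i (σ i) := by
  have h1 : ∀ f : ι → Bool, Wt w f * (if ∀ i ∈ S, f i = σ i then 1 else 0)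
      = ∏ i, (w i (f i) * (if i ∈ S → f i = σ i then (1:ℝ) else 0)) := by
    intro f
    rw [Finset.prod_mul_distrib, Fintype.prod_boole]
    congr 1
  rw [Finset.sum_congr rfl fun f _ => h1 f,
    sum_prod_bool (fun i b => w i b * if i ∈ S → b = σ i then (1:ℝ) else 0)]
  have h2 : ∀ i, (w i true * (if i ∈ S → true = σ i then (1:ℝ) else 0)
      + w i false * (if i ∈ S → false = σ i then (1:ℝ) else 0))
      = if i ∈ S then w i (σ i) else 1 := by
    intro i
    by_cases hi : i ∈ S
    · cases hσ : σ i <;> simp [hi, hσ]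
    · simp [hi, hw i]
  rw [Finset.prod_congr rfl fun i _ => h2 i, Fintype.prod_ite_mem]

/-- `g` depends only on coordinates in `S` -/
def DepOn (g : (ι → Bool) → ℝ) (S : Set ι) : Prop :=
  ∀ f f' : ι → Bool, (∀ i ∈ S, f i = f' i) → g f = g f'
end Indep

section Indep2
open scoped Classical
variable {ι : Type*} [Fintype ι] [DecidableEq ι]

lemma indep_mul (w : ι → Bool → ℝ) (hw : ∀ i, w i true + w i false = 1)
    (P : ι → Prop) (g h : (ι → Bool) → ℝ)
    (hg : DepOn g {i | P i}) (hh : DepOn h {i | ¬ P i}) :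
    ∑ f : ι → Bool, Wt w f * (g f * h f)
      = (∑ f : ι → Bool, Wt w f * g f) * (∑ f : ι → Bool, Wt w f * h f) := by
  classical
  set e := (Equiv.piEquivPiSubtypeProd P (fun _ => Bool)) with he
  have hsum : ∀ F : (ι → Bool) → ℝ,
      ∑ f : ι → Bool, F f = ∑ u : {x // P x} → Bool, ∑ v : {x // ¬ P x} → Bool,
        F (e.symm (u, v)) := by
    intro F
    rw [← Equiv.sum_comp e.symm F, Fintype.sum_prod_type]
  have hcoord : ∀ (u : {x // P x} → Bool) (v : {x // ¬ P x} → Bool) (i : ι),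
      e.symm (u, v) i = if hi : P i then u ⟨i, hi⟩ else v ⟨i, hi⟩ := by
    intro u v i
    simp [he, Equiv.piEquivPiSubtypeProd]
  have hW : ∀ (u : {x // P x} → Bool) (v : {x // ¬ P x} → Bool),
      Wt w (e.symm (u, v)) = (∏ i : {x // P x}, w i (u i)) * ∏ i : {x // ¬ P x}, w i (v i) := by
    intro u v
    rw [Wt, ← Fintype.prod_subtype_mul_prod_subtype P (fun i => w i (e.symm (u, v) i))]
    congr 1
    · exact Finset.prod_congr rfl fun i _ => by rw [hcoord, dif_pos i.2]
    · exact Finset.prod_congr rfl fun i _ => by rw [hcoord, dif_neg i.2]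
  have hG : ∀ (u : {x // P x} → Bool) (v : {x // ¬ P x} → Bool),
      g (e.symm (u, v)) = g (e.symm (u, fun _ => false)) := by
    intro u v
    refine hg _ _ fun i hi => ?_
    have hi' : P i := hi
    rw [hcoord, hcoord, dif_pos hi', dif_pos hi']
  have hH : ∀ (u : {x // P x} → Bool) (v : {x // ¬ P x} → Bool),
      h (e.symm (u, v)) = h (e.symm ((fun _ => false), v)) := by
    intro u v
    refine hh _ _ fun i hi => ?_
    have hi' : ¬ P i := hi
    rw [hcoord, hcoord, dif_neg hi', dif_neg hi']
  have hA : ∑ u : {x // P x} → Bool, ∏ i : {x // P x}, w i (u i) = 1 :=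
    Wt_total _ (fun i => hw i)
  have hB : ∑ v : {x // ¬ P x} → Bool, ∏ i : {x // ¬ P x}, w i (v i) = 1 :=
    Wt_total _ (fun i => hw i)
  have Eg : (∑ f : ι → Bool, Wt w f * g f)
      = ∑ u : {x // P x} → Bool,
          (∏ i : {x // P x}, w i (u i)) * g (e.symm (u, fun _ => false)) := by
    rw [hsum (fun f => Wt w f * g f)]
    refine Finset.sum_congr rfl fun u _ => ?_
    have h3 : ∀ v : {x // ¬ P x} → Bool, Wt w (e.symm (u, v)) * g (e.symm (u, v))
        = ((∏ i : {x // P x}, w i (u i)) * g (e.symm (u, fun _ => false)))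
          * (∏ i : {x // ¬ P x}, w i (v i)) := by
      intro v; rw [hW, hG]; ring
    rw [Finset.sum_congr rfl fun v _ => h3 v, ← Finset.mul_sum, hB, mul_one]
  have Eh : (∑ f : ι → Bool, Wt w f * h f)
      = ∑ v : {x // ¬ P x} → Bool,
          (∏ i : {x // ¬ P x}, w i (v i)) * h (e.symm ((fun _ => false), v)) := by
    rw [hsum (fun f => Wt w f * h f), Finset.sum_comm]
    refine Finset.sum_congr rfl fun v _ => ?_
    have h3 : ∀ u : {x // P x} → Bool, Wt w (e.symm (u, v)) * h (e.symm (u, v))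
        = ((∏ i : {x // ¬ P x}, w i (v i)) * h (e.symm ((fun _ => false), v)))
          * (∏ i : {x // P x}, w i (u i)) := by
      intro u; rw [hW, hH]; ring
    rw [Finset.sum_congr rfl fun u _ => h3 u, ← Finset.mul_sum, hA, mul_one]
  rw [hsum (fun f => Wt w f * (g f * h f)), Eg, Eh, Finset.sum_mul_sum]
  refine Finset.sum_congr rfl fun u _ => Finset.sum_congr rfl fun v _ => ?_
  rw [hW, hG, hH]; ring

end Indep2

section Indep3
open scoped Classical
variable {ι : Type*} [Fintype ι] [DecidableEq ι]

lemma indep_prod (w : ι → Bool → ℝ) (hw : ∀ i, w i true + w i false = 1)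
    {J : Type*} (t : Finset J) (S : J → Set ι) (g : J → (ι → Bool) → ℝ)
    (hdep : ∀ j ∈ t, DepOn (g j) (S j))
    (hdisj : ∀ j ∈ t, ∀ k ∈ t, j ≠ k → Disjoint (S j) (S k)) :
    ∑ f : ι → Bool, Wt w f * ∏ j ∈ t, g j f
      = ∏ j ∈ t, ∑ f : ι → Bool, Wt w f * g j f := by
  classical
  induction t using Finset.induction_on with
  | empty => simp [Wt_total w hw]
  | insert a t ha ih =>
    have step : ∑ f : ι → Bool, Wt w f * ∏ j ∈ insert a t, g j f
        = ∑ f : ι → Bool, Wt w f * (g a f * ∏ j ∈ t, g j f) := by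
      refine Finset.sum_congr rfl fun f _ => ?_
      rw [Finset.prod_insert ha]
    rw [step, indep_mul w hw (fun i => i ∈ S a) (g a) (fun f => ∏ j ∈ t, g j f)
        ?_ ?_, Finset.prod_insert ha, ih ?_ ?_]
    · intro j hj
      exact hdep j (Finset.mem_insert_of_mem hj)
    · intro j hj k hk hjk
      exact hdisj j (Finset.mem_insert_of_mem hj) k (Finset.mem_insert_of_mem hk) hjk
    · exact hdep a (Finset.mem_insert_self a t)
    · intro f f' hff
      refine Finset.prod_congr rfl fun j hj => ?_
      refine hdep j (Finset.mem_insert_of_mem hj) f f' fun i hi => ?_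
      refine hff i ?_
      have hd := hdisj j (Finset.mem_insert_of_mem hj) a (Finset.mem_insert_self a t)
        (by rintro rfl; exact ha hj)
      exact Set.disjoint_left.mp hd hi

end Indep3

section Graph
open scoped Classical

variable {n : ℕ}

/-- potential edges -/
abbrev ESet (n : ℕ) := {e : Sym2 (Fin n) // ¬ e.IsDiag}

/-- the graph associated to an edge-configuration -/
def gOf (f : ESet n → Bool) : SimpleGraph (Fin n) where
  Adj x y := ∃ h : ¬ (s(x, y) : Sym2 (Fin n)).IsDiag, f ⟨s(x, y), h⟩ = true
  symm := by
    constructor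
    intro x y hxy
    obtain ⟨h, hf⟩ := hxy
    have hs : (s(y, x) : Sym2 (Fin n)) = s(x, y) := Sym2.eq_swap
    refine ⟨by rw [hs]; exact h, ?_⟩
    have : (⟨s(y, x), by rw [hs]; exact h⟩ : ESet n) = ⟨s(x, y), h⟩ := Subtype.ext hs
    rw [this]; exact hf
  loopless := by
    constructor
    intro x hx
    obtain ⟨h, _⟩ := hx
    exact h (by simp)

lemma gOf_adj (f : ESet n → Bool) (x y : Fin n) :
    (gOf f).Adj x y ↔ ∃ h : ¬ (s(x, y) : Sym2 (Fin n)).IsDiag, f ⟨s(x, y), h⟩ = true :=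
  Iff.rfl

lemma gOf_adj' (f : ESet n → Bool) {x y : Fin n} (h : ¬ (s(x, y) : Sym2 (Fin n)).IsDiag) :
    (gOf f).Adj x y ↔ f ⟨s(x, y), h⟩ = true := by
  rw [gOf_adj]
  exact ⟨fun ⟨h', hf⟩ => hf, fun hf => ⟨h, hf⟩⟩

lemma gOf_bijective : Function.Bijective (gOf (n := n)) := by
  constructor
  · intro f f' hff
    funext e
    obtain ⟨e, he⟩ := e
    induction e using Sym2.ind with
    | _ x y =>
      have h1 : (gOf f).Adj x y ↔ (gOf f').Adj x y := by rw [hff]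
      rw [gOf_adj' f he, gOf_adj' f' he] at h1
      cases h2 : f ⟨s(x, y), he⟩ <;> cases h3 : f' ⟨s(x, y), he⟩ <;> simp_all
  · intro G
    refine ⟨fun e => decide (e.1 ∈ G.edgeSet), ?_⟩
    ext x y
    rw [gOf_adj]
    constructor
    · rintro ⟨h, hf⟩
      have := of_decide_eq_true hf
      simpa using this
    · intro hadj
      refine ⟨by simp [Sym2.mk_isDiag_iff]; exact hadj.ne, decide_eq_true ?_⟩
      simpa using hadj

lemma gOf_edgeSet (f : ESet n → Bool) :
    (gOf f).edgeSet = Subtype.val '' {e : ESet n | f e = true} := by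
  ext e
  induction e using Sym2.ind with
  | _ x y =>
    simp only [SimpleGraph.mem_edgeSet, gOf_adj, Set.mem_image, Set.mem_setOf_eq]
    constructor
    · rintro ⟨h, hf⟩
      exact ⟨⟨s(x, y), h⟩, hf, rfl⟩
    · rintro ⟨⟨e', he'⟩, hf, h⟩
      simp only at h
      subst h
      exact ⟨he', hf⟩

lemma gOf_card (f : ESet n → Bool) :
    Nat.card (gOf f).edgeSet
      = (Finset.univ.filter (fun e : ESet n => f e = true)).card := by
  have h1 : {e : ESet n | f e = true}
      = ↑(Finset.univ.filter (fun e : ESet n => f e = true)) := by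
    ext e; simp
  rw [gOf_edgeSet, Nat.card_coe_set_eq, Set.ncard_image_of_injective _ Subtype.val_injective,
    h1, Set.ncard_coe_finset]

lemma card_ESet : Fintype.card (ESet n) = n.choose 2 := by
  rw [Sym2.card_subtype_not_diag, Fintype.card_fin]

lemma gOf_weight {p : ℝ} (f : ESet n → Bool) :
    p ^ (Nat.card (gOf f).edgeSet) * (1 - p) ^ (n.choose 2 - Nat.card (gOf f).edgeSet)
      = Wt (fun (_ : ESet n) b => if b then p else 1 - p) f := by
  rw [gOf_card, Wt]
  rw [Finset.prod_ite (f := fun _ => p) (g := fun _ => 1 - p), Finset.prod_const,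
    Finset.prod_const]
  congr 1
  have h2 : (Finset.univ.filter (fun e : ESet n => f e = true)).card
      + (Finset.univ.filter (fun e : ESet n => ¬ f e = true)).card = n.choose 2 := by
    have h3 := Finset.card_filter_add_card_filter_not
      (s := (Finset.univ : Finset (ESet n))) (p := fun e => f e = true)
    rw [Finset.card_univ, card_ESet] at h3
    exact h3
  congr 1
  omega

end Graph

section Quad
open scoped Classical

variable {n : ℕ}

/-- Boolean adjacency of a configuration. -/
noncomputable def edb (x y : Fin n) (f : ESet n → Bool) : Bool :=
  if h : ¬ (s(x, y) : Sym2 (Fin n)).IsDiag then f ⟨s(x, y), h⟩ else false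

lemma gOf_adj_edb (f : ESet n → Bool) (x y : Fin n) :
    (gOf f).Adj x y ↔ edb x y f = true := by
  unfold edb
  by_cases h : ¬ (s(x, y) : Sym2 (Fin n)).IsDiag
  · rw [dif_pos h, gOf_adj' f h]
  · rw [dif_neg h]
    rw [not_not, Sym2.mk_isDiag_iff] at h
    subst h
    simp [(gOf f).loopless.irrefl x]

lemma edb_depOn (x y : Fin n) (f f' : ESet n → Bool)
    (h : ∀ i : ESet n, i.1 = s(x, y) → f i = f' i) : edb x y f = edb x y f' := by
  unfold edb
  split
  · exact h _ rfl
  · rfl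

lemma quad_value {p : ℝ} {a b c d : Fin n}
    (hab : a ≠ b) (hac : a ≠ c) (had : a ≠ d) (hbc : b ≠ c) (hbd : b ≠ d) (hcd : c ≠ d) :
    ∑ f : ESet n → Bool, Wt (fun (_ : ESet n) x => if x then p else 1 - p) f *
      (if ((gOf f).Adj a b ∧ (gOf f).Adj b c ∧ (gOf f).Adj c d ∧ (gOf f).Adj d a ∧
          ¬ (gOf f).Adj a c ∧ ¬ (gOf f).Adj b d ∧
          ∀ e, (gOf f).Adj e c → (gOf f).Adj e a ∨ e = a) then 1 else 0)
      = p ^ 4 * (1 - p) ^ 2 * (p + (1 - p) ^ 2) ^ (n - 4) := by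
  have hba := hab.symm; have hca := hac.symm; have hda := had.symm
  have hcb := hbc.symm; have hdb := hbd.symm; have hdc := hcd.symm
  set w : ESet n → Bool → ℝ := fun _ x => if x then p else 1 - p with hwdef
  have hw : ∀ i : ESet n, w i true + w i false = 1 := by
    intro i; simp [hwdef]
  have hdab : ¬ (s(a, b) : Sym2 (Fin n)).IsDiag := by rw [Sym2.mk_isDiag_iff]; exact hab
  have hdbc : ¬ (s(b, c) : Sym2 (Fin n)).IsDiag := by rw [Sym2.mk_isDiag_iff]; exact hbc
  have hdcd : ¬ (s(c, d) : Sym2 (Fin n)).IsDiag := by rw [Sym2.mk_isDiag_iff]; exact hcd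
  have hdda : ¬ (s(d, a) : Sym2 (Fin n)).IsDiag := by rw [Sym2.mk_isDiag_iff]; exact hda
  have hdac : ¬ (s(a, c) : Sym2 (Fin n)).IsDiag := by rw [Sym2.mk_isDiag_iff]; exact hac
  have hdbd : ¬ (s(b, d) : Sym2 (Fin n)).IsDiag := by rw [Sym2.mk_isDiag_iff]; exact hbd
  set eab : ESet n := ⟨s(a, b), hdab⟩ with heab
  set ebc : ESet n := ⟨s(b, c), hdbc⟩ with hebc
  set ecd : ESet n := ⟨s(c, d), hdcd⟩ with hecd
  set eda : ESet n := ⟨s(d, a), hdda⟩ with heda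
  set eac : ESet n := ⟨s(a, c), hdac⟩ with heac
  set ebd : ESet n := ⟨s(b, d), hdbd⟩ with hebd
  set σcore : ESet n → Bool := fun e =>
    decide (e.1 = s(a, b) ∨ e.1 = s(b, c) ∨ e.1 = s(c, d) ∨ e.1 = s(d, a)) with hσcore
  set Score : Finset (ESet n) := {eab, ebc, ecd, eda, eac, ebd} with hScore
  set ext : Finset (Fin n) := Finset.univ \ {a, b, c, d} with hext
  have hmemext : ∀ v, v ∈ ext ↔ (v ≠ a ∧ v ≠ b ∧ v ≠ c ∧ v ≠ d) := by
    intro v; simp [hext, not_or]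
  -- values of σcore
  have vab : σcore eab = true := by simp [hσcore, heab]
  have vbc : σcore ebc = true := by simp [hσcore, hebc]
  have vcd : σcore ecd = true := by simp [hσcore, hecd]
  have vda : σcore eda = true := by simp [hσcore, heda]
  have vac : σcore eac = false := by
    simp only [hσcore, heac, decide_eq_false_iff_not]
    simp [Sym2.eq_iff, hab, hac, had, hbc, hbd, hcd, hba, hca, hda, hcb, hdb, hdc]
  have vbd : σcore ebd = false := by
    simp only [hσcore, hebd, decide_eq_false_iff_not]
    simp [Sym2.eq_iff, hab, hac, had, hbc, hbd, hcd, hba, hca, hda, hcb, hdb, hdc]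
  -- pointwise logical reduction
  have hScoreIff : ∀ f : ESet n → Bool, (∀ i ∈ Score, f i = σcore i) ↔
      (f eab = true ∧ f ebc = true ∧ f ecd = true ∧ f eda = true ∧
        f eac = false ∧ f ebd = false) := by
    intro f
    rw [hScore]
    simp only [Finset.mem_insert, Finset.mem_singleton, forall_eq_or_imp, forall_eq]
    rw [vab, vbc, vcd, vda, vac, vbd]
  have hiff : ∀ f : ESet n → Bool,
      ((gOf f).Adj a b ∧ (gOf f).Adj b c ∧ (gOf f).Adj c d ∧ (gOf f).Adj d a ∧
        ¬ (gOf f).Adj a c ∧ ¬ (gOf f).Adj b d ∧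
        ∀ e, (gOf f).Adj e c → (gOf f).Adj e a ∨ e = a)
      ↔ ((∀ i ∈ Score, f i = σcore i) ∧
          (∀ v ∈ ext, edb v c f = true → edb v a f = true)) := by
    intro f
    rw [hScoreIff f, gOf_adj' f hdab, gOf_adj' f hdbc, gOf_adj' f hdcd, gOf_adj' f hdda,
      gOf_adj' f hdac, gOf_adj' f hdbd]
    simp only [Bool.not_eq_true, ← heab, ← hebc, ← hecd, ← heda, ← heac, ← hebd]
    constructor
    · rintro ⟨h1, h2, h3, h4, h5, h6, h7⟩
      refine ⟨⟨h1, h2, h3, h4, h5, h6⟩, ?_⟩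
      intro v hv hvc
      rw [hmemext] at hv
      have hadj : (gOf f).Adj v c := (gOf_adj_edb f v c).mpr hvc
      rcases h7 v hadj with h | h
      · exact (gOf_adj_edb f v a).mp h
      · exact absurd h hv.1
    · rintro ⟨⟨h1, h2, h3, h4, h5, h6⟩, h7⟩
      refine ⟨h1, h2, h3, h4, h5, h6, ?_⟩
      intro e he
      by_cases hea : e = a
      · exact Or.inr hea
      refine Or.inl ?_
      by_cases heb : e = b
      · subst heb
        exact ((gOf f).adj_symm ((gOf_adj' f hdab).mpr h1))
      by_cases hec : e = c
      · rw [hec] at he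
        exact absurd he ((gOf f).loopless.irrefl c)
      by_cases hed : e = d
      · subst hed
        exact (gOf_adj' f hdda).mpr h4
      · have hv : e ∈ ext := (hmemext e).mpr ⟨hea, heb, hec, hed⟩
        exact (gOf_adj_edb f e a).mpr (h7 e hv ((gOf_adj_edb f e c).mp he))
  -- indicator factorization
  have hfact : ∀ f : ESet n → Bool,
      (if ((gOf f).Adj a b ∧ (gOf f).Adj b c ∧ (gOf f).Adj c d ∧ (gOf f).Adj d a ∧
          ¬ (gOf f).Adj a c ∧ ¬ (gOf f).Adj b d ∧
          ∀ e, (gOf f).Adj e c → (gOf f).Adj e a ∨ e = a) then (1:ℝ) else 0)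
      = (if (∀ i ∈ Score, f i = σcore i) then (1:ℝ) else 0)
        * ∏ v ∈ ext, (if (edb v c f = true → edb v a f = true) then (1:ℝ) else 0) := by
    intro f
    rw [Finset.prod_boole]
    by_cases h1 : (∀ i ∈ Score, f i = σcore i)
    · by_cases h2 : (∀ v ∈ ext, edb v c f = true → edb v a f = true)
      · rw [if_pos ((hiff f).mpr ⟨h1, h2⟩), if_pos h1, if_pos h2, mul_one]
      · rw [if_neg (fun hc => h2 ((hiff f).mp hc).2), if_pos h1, if_neg h2, mul_zero]
    · rw [if_neg (fun hc => h1 ((hiff f).mp hc).1), if_neg h1, zero_mul]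
  -- dependence sets
  set Sv : Fin n → Set (ESet n) :=
    fun v => {i : ESet n | i.1 = s(v, c) ∨ i.1 = s(v, a)} with hSv
  have hg : DepOn (fun f : ESet n → Bool =>
      (if (∀ i ∈ Score, f i = σcore i) then (1:ℝ) else 0)) {i | i ∈ Score} := by
    intro f f' hff
    refine if_congr ?_ rfl rfl
    exact forall₂_congr fun i hi => by rw [hff i hi]
  have hdepv : ∀ v ∈ ext, DepOn (fun f : ESet n → Bool =>
      (if (edb v c f = true → edb v a f = true) then (1:ℝ) else 0)) (Sv v) := by
    intro v _ f f' hff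
    have h1 : edb v c f = edb v c f' := edb_depOn v c f f' fun i hi => hff i (Or.inl hi)
    have h2 : edb v a f = edb v a f' := edb_depOn v a f f' fun i hi => hff i (Or.inr hi)
    simp only [h1, h2]
  have hsub : ∀ v ∈ ext, Sv v ⊆ {i | ¬ i ∈ Score} := by
    intro v hv i hi
    rw [hmemext] at hv
    obtain ⟨hva, hvb, hvc, hvd⟩ := hv
    have hav := hva.symm; have hbv := hvb.symm; have hcv := hvc.symm; have hdv := hvd.symm
    intro hmem
    rw [hScore] at hmem
    simp only [Finset.mem_insert, Finset.mem_singleton] at hmem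
    rcases hmem with rfl | rfl | rfl | rfl | rfl | rfl <;>
      simp [hSv, heab, hebc, hecd, heda, heac, hebd, Sym2.eq_iff, hab, hac, had, hbc, hbd, hcd, hba, hca, hda, hcb, hdb, hdc,
        hva, hvb, hvc, hvd, hav, hbv, hcv, hdv] at hi
  have hdisjv : ∀ v ∈ ext, ∀ u ∈ ext, v ≠ u → Disjoint (Sv v) (Sv u) := by
    intro v hv u hu hvu
    rw [Set.disjoint_left]
    intro i hiv hiu
    rw [hmemext] at hv hu
    simp only [hSv, Set.mem_setOf_eq] at hiv hiu
    rcases hiv with h1 | h1 <;> rcases hiu with h2 | h2 <;> rw [h1] at h2 <;>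
      simp [Sym2.eq_iff, hvu, hvu.symm, hv.1, hv.2.2.1, hu.1, hu.2.2.1,
        hv.1.symm, hv.2.2.1.symm, hu.1.symm, hu.2.2.1.symm, hac, hca] at h2
  have hprod : DepOn (fun f : ESet n → Bool =>
      ∏ v ∈ ext, (if (edb v c f = true → edb v a f = true) then (1:ℝ) else 0))
      {i | ¬ i ∈ Score} := by
    intro f f' hff
    refine Finset.prod_congr rfl fun v hv => ?_
    exact hdepv v hv f f' fun i hi => hff i (hsub v hv hi)
  -- core value
  have hcore : ∑ f : ESet n → Bool, Wt w f *
      (if (∀ i ∈ Score, f i = σcore i) then (1:ℝ) else 0)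
      = p ^ 4 * (1 - p) ^ 2 := by
    rw [Wt_cylinder w hw Score σcore, hScore]
    have d1 : eab ∉ ({ebc, ecd, eda, eac, ebd} : Finset (ESet n)) := by
      simp [heab, hebc, hecd, heda, heac, hebd, Sym2.eq_iff,
        hab, hac, had, hbc, hbd, hcd, hba, hca, hda, hcb, hdb, hdc]
    have d2 : ebc ∉ ({ecd, eda, eac, ebd} : Finset (ESet n)) := by
      simp [hebc, hecd, heda, heac, hebd, Sym2.eq_iff,
        hab, hac, had, hbc, hbd, hcd, hba, hca, hda, hcb, hdb, hdc]
    have d3 : ecd ∉ ({eda, eac, ebd} : Finset (ESet n)) := by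
      simp [hecd, heda, heac, hebd, Sym2.eq_iff,
        hab, hac, had, hbc, hbd, hcd, hba, hca, hda, hcb, hdb, hdc]
    have d4 : eda ∉ ({eac, ebd} : Finset (ESet n)) := by
      simp [heda, heac, hebd, Sym2.eq_iff,
        hab, hac, had, hbc, hbd, hcd, hba, hca, hda, hcb, hdb, hdc]
    have d5 : eac ≠ ebd := by
      simp [heac, hebd, Sym2.eq_iff,
        hab, hac, had, hbc, hbd, hcd, hba, hca, hda, hcb, hdb, hdc]
    rw [Finset.prod_insert d1, Finset.prod_insert d2, Finset.prod_insert d3,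
      Finset.prod_insert d4, Finset.prod_pair d5, vab, vbc, vcd, vda, vac, vbd]
    simp only [hwdef]
    norm_num
    ring
  -- external vertex value
  have hvval : ∀ v ∈ ext, (∑ f : ESet n → Bool, Wt w f *
      (if (edb v c f = true → edb v a f = true) then (1:ℝ) else 0))
      = p + (1 - p) ^ 2 := by
    intro v hv
    rw [hmemext] at hv
    obtain ⟨hva, hvb, hvc, hvd⟩ := hv
    have hd1 : ¬ (s(v, c) : Sym2 (Fin n)).IsDiag := by rw [Sym2.mk_isDiag_iff]; exact hvc
    have hd2 : ¬ (s(v, a) : Sym2 (Fin n)).IsDiag := by rw [Sym2.mk_isDiag_iff]; exact hva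
    set evc : ESet n := ⟨s(v, c), hd1⟩ with hevc
    set eva : ESet n := ⟨s(v, a), hd2⟩ with heva
    set σv : ESet n → Bool := fun e => decide (e.1 = s(v, c)) with hσv
    have hne : evc ≠ eva := by
      simp [hevc, heva, Sym2.eq_iff, hac, hca, hva, hvc]
    have hvc1 : σv evc = true := by simp [hσv, hevc]
    have hvc2 : σv eva = false := by
      simp only [hσv, heva, decide_eq_false_iff_not]
      simp [Sym2.eq_iff, hac, hca, hva, hvc]
    have hedb1 : ∀ f : ESet n → Bool, edb v c f = f evc := by
      intro f; unfold edb; exact dif_pos hd1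
    have hedb2 : ∀ f : ESet n → Bool, edb v a f = f eva := by
      intro f; unfold edb; exact dif_pos hd2
    have hptw : ∀ f : ESet n → Bool,
        Wt w f * (if (edb v c f = true → edb v a f = true) then (1:ℝ) else 0)
        = Wt w f - Wt w f *
            (if (∀ i ∈ ({evc, eva} : Finset (ESet n)), f i = σv i) then (1:ℝ) else 0) := by
      intro f
      have hcyl : (∀ i ∈ ({evc, eva} : Finset (ESet n)), f i = σv i)
          ↔ (f evc = true ∧ f eva = false) := by
        simp only [Finset.mem_insert, Finset.mem_singleton, forall_eq_or_imp, forall_eq]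
        rw [hvc1, hvc2]
      rw [hedb1, hedb2]
      cases hb1 : f evc <;> cases hb2 : f eva <;>
        simp [hcyl, hb1, hb2, hvc1, hvc2]
    rw [Finset.sum_congr rfl fun f _ => hptw f, Finset.sum_sub_distrib,
      Wt_total w hw, Wt_cylinder w hw {evc, eva} σv, Finset.prod_pair hne,
      hvc1, hvc2]
    simp only [hwdef]
    norm_num
    ring
  -- size of the exterior
  have hcardext : ext.card = n - 4 := by
    rw [hext, Finset.card_sdiff_of_subset (Finset.subset_univ _), Finset.card_univ, Fintype.card_fin]
    congr 1
    rw [Finset.card_insert_of_notMem (by simp [hab, hac, had]),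
      Finset.card_insert_of_notMem (by simp [hbc, hbd]),
      Finset.card_insert_of_notMem (by simp [hcd]), Finset.card_singleton]
  -- put everything together
  rw [Finset.sum_congr rfl fun f _ => by rw [hfact f]]
  rw [indep_mul w hw (fun i => i ∈ Score) _ _ hg hprod,
    indep_prod w hw ext Sv _ hdepv hdisjv, hcore,
    Finset.prod_congr rfl hvval, Finset.prod_const, hcardext]

end Quad

section Count
open scoped Classical

lemma card_distinct_quads (n : ℕ) :
    (Finset.univ.filter (fun q : Fin n × Fin n × Fin n × Fin n =>
      q.1 ≠ q.2.1 ∧ q.1 ≠ q.2.2.1 ∧ q.1 ≠ q.2.2.2 ∧ q.2.1 ≠ q.2.2.1 ∧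
        q.2.1 ≠ q.2.2.2 ∧ q.2.2.1 ≠ q.2.2.2)).card
      = n.descFactorial 4 := by
  classical
  have h := Finset.card_bij'
    (s := Finset.univ.filter (fun q : Fin n × Fin n × Fin n × Fin n =>
      q.1 ≠ q.2.1 ∧ q.1 ≠ q.2.2.1 ∧ q.1 ≠ q.2.2.2 ∧ q.2.1 ≠ q.2.2.1 ∧
        q.2.1 ≠ q.2.2.2 ∧ q.2.2.1 ≠ q.2.2.2))
    (t := (Finset.univ : Finset (Fin 4 ↪ Fin n)))
    (i := fun q hq => ⟨![q.1, q.2.1, q.2.2.1, q.2.2.2], by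
      simp only [Finset.mem_filter] at hq
      obtain ⟨-, h1, h2, h3, h4, h5, h6⟩ := hq
      intro x y hxy
      fin_cases x <;> fin_cases y <;> simp_all⟩)
    (j := fun g _ => (g 0, g 1, g 2, g 3))
    (hi := fun q hq => Finset.mem_univ _)
    (hj := ?_) (left_inv := ?_) (right_inv := ?_)
  · rw [h, Finset.card_univ, Fintype.card_embedding_eq, Fintype.card_fin, Fintype.card_fin]
  · intro g _
    simp only [Finset.mem_filter, Finset.mem_univ, true_and]
    refine ⟨fun h => ?_, fun h => ?_, fun h => ?_, fun h => ?_, fun h => ?_, fun h => ?_⟩ <;>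
      · have := g.injective h
        simp_all
  · intro q hq
    rfl
  · intro g _
    ext x
    fin_cases x <;> rfl

end Count

open scoped Classical in
/-- In `G(n,p)` with `n ≥ 4`, the expected number of ordered domination diamonds
`(a,b,c,d)` is `n(n-1)(n-2)(n-3) p^4 (1-p)^2 (p+(1-p)^2)^(n-4)`. -/
theorem expected_domination_diamonds {n : ℕ} (hn : 4 ≤ n) {p : ℝ}
    (hp0 : 0 ≤ p) (hp1 : p ≤ 1) :
    ∑ G : SimpleGraph (Fin n),
        (p ^ (Nat.card G.edgeSet) * (1 - p) ^ (n.choose 2 - Nat.card G.edgeSet)) *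
          ((Finset.univ.filter (fun q : Fin n × Fin n × Fin n × Fin n =>
              let a := q.1; let b := q.2.1; let c := q.2.2.1; let d := q.2.2.2
              a ≠ b ∧ a ≠ c ∧ a ≠ d ∧ b ≠ c ∧ b ≠ d ∧ c ≠ d ∧
                G.Adj a b ∧ G.Adj b c ∧ G.Adj c d ∧ G.Adj d a ∧
                ¬ G.Adj a c ∧ ¬ G.Adj b d ∧
                ∀ e, G.Adj e c → G.Adj e a ∨ e = a)).card : ℝ)
      = n * (n - 1) * (n - 2) * (n - 3) *
          (p ^ 4 * (1 - p) ^ 2 * (p + (1 - p) ^ 2) ^ (n - 4)) := by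
  classical
  set w : ESet n → Bool → ℝ := fun _ x => if x then p else 1 - p with hwdef
  have hw : ∀ i : ESet n, w i true + w i false = 1 := by intro i; simp [hwdef]
  set P : (Fin n × Fin n × Fin n × Fin n) → SimpleGraph (Fin n) → Prop :=
    fun q G =>
      q.1 ≠ q.2.1 ∧ q.1 ≠ q.2.2.1 ∧ q.1 ≠ q.2.2.2 ∧ q.2.1 ≠ q.2.2.1 ∧
        q.2.1 ≠ q.2.2.2 ∧ q.2.2.1 ≠ q.2.2.2 ∧
        G.Adj q.1 q.2.1 ∧ G.Adj q.2.1 q.2.2.1 ∧ G.Adj q.2.2.1 q.2.2.2 ∧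
        G.Adj q.2.2.2 q.1 ∧ ¬ G.Adj q.1 q.2.2.1 ∧ ¬ G.Adj q.2.1 q.2.2.2 ∧
        ∀ e, G.Adj e q.2.2.1 → G.Adj e q.1 ∨ e = q.1 with hP
  have h0 : ∑ G : SimpleGraph (Fin n),
      (p ^ (Nat.card G.edgeSet) * (1 - p) ^ (n.choose 2 - Nat.card G.edgeSet)) *
        ((Finset.univ.filter (fun q => P q G)).card : ℝ)
      = ∑ f : ESet n → Bool,
        (p ^ (Nat.card (gOf f).edgeSet)
            * (1 - p) ^ (n.choose 2 - Nat.card (gOf f).edgeSet)) *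
          ((Finset.univ.filter (fun q => P q (gOf f))).card : ℝ) :=
    (Fintype.sum_bijective gOf gOf_bijective _ _ (fun f => rfl)).symm
  calc
    ∑ G : SimpleGraph (Fin n),
        (p ^ (Nat.card G.edgeSet) * (1 - p) ^ (n.choose 2 - Nat.card G.edgeSet)) *
          ((Finset.univ.filter (fun q : Fin n × Fin n × Fin n × Fin n =>
              let a := q.1; let b := q.2.1; let c := q.2.2.1; let d := q.2.2.2
              a ≠ b ∧ a ≠ c ∧ a ≠ d ∧ b ≠ c ∧ b ≠ d ∧ c ≠ d ∧
                G.Adj a b ∧ G.Adj b c ∧ G.Adj c d ∧ G.Adj d a ∧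
                ¬ G.Adj a c ∧ ¬ G.Adj b d ∧
                ∀ e, G.Adj e c → G.Adj e a ∨ e = a)).card : ℝ)
      = ∑ f : ESet n → Bool,
          (p ^ (Nat.card (gOf f).edgeSet)
              * (1 - p) ^ (n.choose 2 - Nat.card (gOf f).edgeSet)) *
            ((Finset.univ.filter (fun q => P q (gOf f))).card : ℝ) := h0
    _ = ∑ f : ESet n → Bool, ∑ q : Fin n × Fin n × Fin n × Fin n,
          Wt w f * (if P q (gOf f) then (1:ℝ) else 0) := by
        refine Finset.sum_congr rfl fun f _ => ?_
        rw [gOf_weight, Finset.card_filter]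
        push_cast
        rw [Finset.mul_sum]
    _ = ∑ q : Fin n × Fin n × Fin n × Fin n, ∑ f : ESet n → Bool,
          Wt w f * (if P q (gOf f) then (1:ℝ) else 0) := Finset.sum_comm
    _ = n * (n - 1) * (n - 2) * (n - 3) *
          (p ^ 4 * (1 - p) ^ 2 * (p + (1 - p) ^ 2) ^ (n - 4)) := ?_
  set D : (Fin n × Fin n × Fin n × Fin n) → Prop := fun q =>
    q.1 ≠ q.2.1 ∧ q.1 ≠ q.2.2.1 ∧ q.1 ≠ q.2.2.2 ∧ q.2.1 ≠ q.2.2.1 ∧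
      q.2.1 ≠ q.2.2.2 ∧ q.2.2.1 ≠ q.2.2.2 with hD
  rw [← Finset.sum_filter_add_sum_filter_not Finset.univ D]
  have hzero : ∑ q ∈ Finset.univ.filter (fun q => ¬ D q), ∑ f : ESet n → Bool,
      Wt w f * (if P q (gOf f) then (1:ℝ) else 0) = 0 := by
    refine Finset.sum_eq_zero fun q hq => Finset.sum_eq_zero fun f _ => ?_
    simp only [Finset.mem_filter] at hq
    rw [if_neg, mul_zero]
    intro hPq
    exact hq.2 ⟨hPq.1, hPq.2.1, hPq.2.2.1, hPq.2.2.2.1, hPq.2.2.2.2.1, hPq.2.2.2.2.2.1⟩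
  have hval : ∀ q ∈ Finset.univ.filter D, (∑ f : ESet n → Bool,
      Wt w f * (if P q (gOf f) then (1:ℝ) else 0))
      = p ^ 4 * (1 - p) ^ 2 * (p + (1 - p) ^ 2) ^ (n - 4) := by
    intro q hq
    simp only [Finset.mem_filter, hD] at hq
    obtain ⟨-, hab, hac, had, hbc, hbd, hcd⟩ := hq
    have hstep : ∀ f : ESet n → Bool,
        Wt w f * (if P q (gOf f) then (1:ℝ) else 0)
        = Wt w f * (if ((gOf f).Adj q.1 q.2.1 ∧ (gOf f).Adj q.2.1 q.2.2.1 ∧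
            (gOf f).Adj q.2.2.1 q.2.2.2 ∧ (gOf f).Adj q.2.2.2 q.1 ∧
            ¬ (gOf f).Adj q.1 q.2.2.1 ∧ ¬ (gOf f).Adj q.2.1 q.2.2.2 ∧
            ∀ e, (gOf f).Adj e q.2.2.1 → (gOf f).Adj e q.1 ∨ e = q.1)
            then (1:ℝ) else 0) := by
      intro f
      congr 1
      refine if_congr ?_ rfl rfl
      simp only [hP]
      tauto
    rw [Finset.sum_congr rfl fun f _ => hstep f]
    exact quad_value hab hac had hbc hbd hcd
  rw [Finset.sum_congr rfl hval, hzero, add_zero, Finset.sum_const, card_distinct_quads,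
    nsmul_eq_mul]
  have hcast : ((n.descFactorial 4 : ℕ) : ℝ) = n * (n - 1) * (n - 2) * (n - 3) := by
    have h4 : n.descFactorial 4 = (n - 3) * ((n - 2) * ((n - 1) * n)) := by
      simp [Nat.descFactorial]
    rw [h4]
    push_cast [Nat.cast_sub (show 3 ≤ n by omega), Nat.cast_sub (show 2 ≤ n by omega),
      Nat.cast_sub (show 1 ≤ n by omega)]
    ring
  rw [hcast]
end

section
/- Let k ≥ 1 be an integer and let F(x,y) = x^{k+1}·(y + (1−y)^{k+1})^{x−k−1}. If p(n) is a sequence of probabilities satisfying 2(log n + ω(n))/n ≤ p(n) ≤ 1 − (k+1)(log n + ω(n))/n for some sequence ω(n) → +∞, then F(n, p(n)) → 0 as n → ∞. -/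
set_option maxHeartbeats 1000000

open Filter Real

private lemma one_sub_pow_le_aux (m : ℕ) (x : ℝ) (h0 : 0 ≤ x) (h1 : x ≤ 1) :
    (1 - x) ^ m ≤ 1 - m * x + (m : ℝ) ^ 2 * x ^ 2 := by
  induction m with
  | zero => simp
  | succ m ih =>
    have hx : 0 ≤ 1 - x := by linarith
    have h3 : (1 - x) ^ m * (1 - x) ≤ (1 - m * x + (m : ℝ) ^ 2 * x ^ 2) * (1 - x) :=
      mul_le_mul_of_nonneg_right ih hx
    have h4 : (1 - x) ^ (m + 1) = (1 - x) ^ m * (1 - x) := by ring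
    push_cast
    nlinarith [sq_nonneg x, mul_nonneg (mul_nonneg (sq_nonneg (m : ℝ)) h0) (sq_nonneg x),
      mul_nonneg (Nat.cast_nonneg (α := ℝ) m) (sq_nonneg x)]

private lemma quad_max_aux (c a b q D : ℝ) (hc : 0 ≤ c) (hab : a ≤ b) (hap : a ≤ q)
    (hpb : q ≤ b) (hA : a + c * (1 - a) ^ 2 ≤ D) (hB : b + c * (1 - b) ^ 2 ≤ D) :
    q + c * (1 - q) ^ 2 ≤ D := by
  rcases eq_or_lt_of_le hab with h | h
  · have hqa : q = a := le_antisymm (h ▸ hpb) hap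
    rw [hqa]; exact hA
  · have h1 : 0 ≤ (b - q) * (D - (a + c * (1 - a) ^ 2)) :=
      mul_nonneg (by linarith) (by linarith)
    have h2 : 0 ≤ (q - a) * (D - (b + c * (1 - b) ^ 2)) :=
      mul_nonneg (by linarith) (by linarith)
    have h3 : 0 ≤ c * ((q - a) * ((b - q) * (b - a))) :=
      mul_nonneg hc (mul_nonneg (by linarith) (mul_nonneg (by linarith) (by linarith)))
    have key : (b - a) * (q + c * (1 - q) ^ 2) ≤ (b - a) * D := by nlinarith
    exact le_of_mul_le_mul_left key (by linarith)

open Filter Real in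
/-- For fixed `k ≥ 1` and `F(x,y) = x^(k+1) (y+(1-y)^(k+1))^(x-k-1)`: if `p(n)` is a
sequence of probabilities with
`2(log n + ω(n))/n ≤ p(n) ≤ 1 - (k+1)(log n + ω(n))/n` for some `ω(n) → ∞`,
then `F(n, p(n)) → 0` as `n → ∞`. -/
theorem tendsto_F_zero (k : ℕ) (hk : 1 ≤ k) (p : ℕ → ℝ) (ω : ℕ → ℝ)
    (hp0 : ∀ n, 0 ≤ p n) (hp1 : ∀ n, p n ≤ 1)
    (hω : Tendsto ω atTop atTop)
    (hlow : ∀ n : ℕ, 2 * (Real.log n + ω n) / n ≤ p n)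
    (hhigh : ∀ n : ℕ, p n ≤ 1 - (k + 1) * (Real.log n + ω n) / n) :
    Tendsto (fun n : ℕ =>
        (n : ℝ) ^ (k + 1) * (p n + (1 - p n) ^ (k + 1)) ^ ((n : ℝ) - k - 1))
      atTop (nhds 0) := by
  have hk1 : (1 : ℝ) ≤ (k : ℝ) := by exact_mod_cast hk
  set S : Set ℕ := {n : ℕ | Real.log n + ω n ≤ Real.sqrt n} with hSdef
  have hF0 : ∀ n : ℕ, 0 ≤ (n : ℝ) ^ (k + 1) *
      (p n + (1 - p n) ^ (k + 1)) ^ ((n : ℝ) - k - 1) := by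
    intro n
    have h2 : (0:ℝ) ≤ (1 - p n) ^ (k+1) := pow_nonneg (by linarith [hp1 n]) _
    have hb : 0 ≤ p n + (1 - p n) ^ (k + 1) := by linarith [hp0 n]
    exact mul_nonneg (by positivity) (Real.rpow_nonneg hb _)
  have hω0 : ∀ᶠ n : ℕ in atTop, (0 : ℝ) ≤ ω n := hω.eventually_ge_atTop 0
  have hdecomp : (atTop : Filter ℕ) = (atTop ⊓ 𝓟 S) ⊔ (atTop ⊓ 𝓟 Sᶜ) := by
    rw [← inf_sup_left, Filter.sup_principal, Set.union_compl_self, Filter.principal_univ,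
      inf_top_eq]
  rw [hdecomp, Filter.tendsto_sup]
  constructor
  · -- Case 1 : log n + ω n ≤ √n
    set Ck : ℝ := 4 * ((k : ℝ) + 1) ^ 2 with hCkdef
    have hCk0 : (0 : ℝ) ≤ Ck := by positivity
    apply squeeze_zero'
      (g := fun n => Real.exp (((k:ℝ)+1)^2 + Ck) * Real.exp (-(((k:ℝ)+1)) * ω n))
      (Eventually.of_forall fun n => hF0 n)
    · rw [Filter.eventually_inf_principal]
      filter_upwards [hω0, Filter.eventually_ge_atTop (k + 2)] with n hω0n hn2 hSn
      have hn1 : 1 ≤ n := by omega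
      have hn0 : (0 : ℝ) < n := by exact_mod_cast Nat.pos_of_ne_zero (by omega)
      have hnk : ((k : ℝ) + 2) ≤ (n : ℝ) := by exact_mod_cast hn2
      set L : ℝ := Real.log n + ω n with hLdef
      set t : ℝ := L / n with htdef
      have hlog0 : (0:ℝ) ≤ Real.log n := Real.log_nonneg (by exact_mod_cast hn1)
      have hL0 : (0:ℝ) ≤ L := by rw [hLdef]; linarith
      have ht0 : 0 ≤ t := div_nonneg hL0 hn0.le
      have hSn' : L ≤ Real.sqrt n := hSn
      have hL2 : L ^ 2 ≤ (n : ℝ) := by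
        have h := pow_le_pow_left₀ hL0 hSn' 2
        rwa [Real.sq_sqrt hn0.le] at h
      have htn : t * (n : ℝ) = L := div_mul_cancel₀ _ hn0.ne'
      have hsqn : Real.sqrt n ≤ (n : ℝ) := by
        calc Real.sqrt n ≤ Real.sqrt ((n:ℝ)^2) := Real.sqrt_le_sqrt (by nlinarith)
          _ = (n : ℝ) := Real.sqrt_sq hn0.le
      have ht1 : t ≤ 1 := by
        rw [htdef, div_le_one hn0]; exact hSn'.trans hsqn
      have htsqn : t ^ 2 * (n : ℝ) ≤ 1 := by
        have heq : t ^ 2 * (n : ℝ) = L ^ 2 / n := by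
          rw [htdef]; field_simp
        rw [heq, div_le_one hn0]; exact hL2
      -- bounds on p
      have hplow : 2 * t ≤ p n := by
        have h := hlow n; rw [mul_div_assoc] at h; exact h
      have hphigh : p n ≤ 1 - ((k : ℝ) + 1) * t := by
        have h := hhigh n
        rw [mul_div_assoc] at h
        convert h using 2 <;> push_cast <;> ring
      have h2t1 : 2 * t ≤ 1 := le_trans hplow (hp1 n)
      set c : ℝ := (1 - 2 * t) ^ (k - 1) with hcdef
      have h12t : (0:ℝ) ≤ 1 - 2*t := by linarith
      have hc0 : 0 ≤ c := pow_nonneg h12t _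
      have hc1 : c ≤ 1 := pow_le_one₀ h12t (by linarith)
      set D : ℝ := 1 - ((k:ℝ)+1) * t + Ck * t^2 with hDdef
      -- endpoint bounds
      have hqa : 2*t + c * (1 - 2*t)^2 ≤ D := by
        have hpowe : c * (1 - 2*t)^2 = (1 - 2*t)^(k+1) := by
          rw [hcdef, ← pow_add]
          congr 1
          omega
        have hb := one_sub_pow_le_aux (k+1) (2*t) (by linarith) h2t1
        rw [hpowe]
        push_cast at hb
        rw [hDdef, hCkdef]
        nlinarith [mul_nonneg (sub_nonneg.2 hk1) ht0]
      have hqb : (1 - ((k:ℝ)+1)*t) + c * (1 - (1 - ((k:ℝ)+1)*t))^2 ≤ D := by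
        have h1 : (1 - (1 - ((k:ℝ)+1)*t))^2 = ((k:ℝ)+1)^2 * t^2 := by ring
        have h2 : c * (((k:ℝ)+1)^2 * t^2) ≤ 1 * (((k:ℝ)+1)^2 * t^2) :=
          mul_le_mul_of_nonneg_right hc1 (by positivity)
        rw [h1, hDdef, hCkdef]
        nlinarith [sq_nonneg t]
      have hqp : p n + c * (1 - p n)^2 ≤ D :=
        quad_max_aux c (2*t) (1 - ((k:ℝ)+1)*t) (p n) D hc0
          (le_trans hplow hphigh) hplow hphigh hqa hqb
      -- base bound
      have hbase : p n + (1 - p n) ^ (k + 1) ≤ D := by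
        have h1 : (1 - p n) ^ (k + 1) = (1 - p n)^(k-1) * (1 - p n)^2 := by
          rw [← pow_add]; congr 1; omega
        have h2 : (1 - p n)^(k-1) ≤ c := by
          rw [hcdef]
          exact pow_le_pow_left₀ (by linarith [hp1 n]) (by linarith) _
        have h3 : (1 - p n)^(k-1) * (1 - p n)^2 ≤ c * (1 - p n)^2 :=
          mul_le_mul_of_nonneg_right h2 (sq_nonneg _)
        calc p n + (1 - p n) ^ (k + 1) = p n + (1 - p n)^(k-1) * (1 - p n)^2 := by rw [h1]
          _ ≤ p n + c * (1 - p n)^2 := by linarith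
          _ ≤ D := hqp
      have hg0 : 0 ≤ p n + (1 - p n) ^ (k + 1) := by
        have h2 : (0:ℝ) ≤ (1 - p n) ^ (k+1) := pow_nonneg (by linarith [hp1 n]) _
        linarith [hp0 n]
      have hD0 : 0 ≤ D := le_trans hg0 hbase
      have he0 : (0:ℝ) ≤ (n : ℝ) - k - 1 := by linarith
      -- exponential bound
      have hDexp : D ≤ Real.exp (-(((k:ℝ)+1) * t) + Ck * t^2) := by
        have := Real.add_one_le_exp (-(((k:ℝ)+1) * t) + Ck * t^2)
        rw [hDdef]; linarith
      have hstep1 : (p n + (1 - p n) ^ (k + 1)) ^ ((n : ℝ) - k - 1) ≤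
          Real.exp ((-(((k:ℝ)+1) * t) + Ck * t^2) * ((n:ℝ) - k - 1)) := by
        calc (p n + (1 - p n) ^ (k + 1)) ^ ((n : ℝ) - k - 1)
            ≤ D ^ ((n : ℝ) - k - 1) := Real.rpow_le_rpow hg0 hbase he0
          _ ≤ (Real.exp (-(((k:ℝ)+1) * t) + Ck * t^2)) ^ ((n : ℝ) - k - 1) :=
              Real.rpow_le_rpow hD0 hDexp he0
          _ = Real.exp ((-(((k:ℝ)+1) * t) + Ck * t^2) * ((n:ℝ) - k - 1)) :=
              (Real.exp_mul _ _).symm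
      have hnpow : ((n:ℝ))^(k+1) = Real.exp (((k:ℝ)+1) * Real.log n) := by
        rw [show ((k:ℝ)+1) = ((k+1 : ℕ) : ℝ) by push_cast; ring, Real.exp_nat_mul,
          Real.exp_log hn0]
      -- exponent estimate
      have hexpo : ((k:ℝ)+1) * Real.log n + (-(((k:ℝ)+1) * t) + Ck * t^2) * ((n:ℝ) - k - 1)
          ≤ (((k:ℝ)+1)^2 + Ck) + (-(((k:ℝ)+1)) * ω n) := by
        have hlogL : Real.log n = L - ω n := by rw [hLdef]; ring
        have hts : Ck * (t^2 * ((n:ℝ) - k - 1)) ≤ Ck := by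
          have h1 : t^2 * ((n:ℝ) - k - 1) ≤ t^2 * n :=
            mul_le_mul_of_nonneg_left (by linarith) (sq_nonneg t)
          calc Ck * (t^2 * ((n:ℝ) - k - 1)) ≤ Ck * 1 :=
                mul_le_mul_of_nonneg_left (h1.trans htsqn) hCk0
            _ = Ck := mul_one _
        have htk : ((k:ℝ)+1)^2 * t ≤ ((k:ℝ)+1)^2 :=
          (mul_le_mul_of_nonneg_left ht1 (by positivity)).trans (by rw [mul_one])
        have hxe : (-(((k:ℝ)+1) * t) + Ck * t^2) * ((n:ℝ) - k - 1)
            = -(((k:ℝ)+1))*L + ((k:ℝ)+1)^2*t + Ck * (t^2 * ((n:ℝ) - k - 1)) := by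
          rw [← htn]; ring
        rw [hlogL, hxe]
        linarith [hts, htk]
      calc (n : ℝ) ^ (k + 1) * (p n + (1 - p n) ^ (k + 1)) ^ ((n : ℝ) - k - 1)
          ≤ (n : ℝ) ^ (k + 1) *
            Real.exp ((-(((k:ℝ)+1) * t) + Ck * t^2) * ((n:ℝ) - k - 1)) :=
            mul_le_mul_of_nonneg_left hstep1 (by positivity)
        _ = Real.exp (((k:ℝ)+1) * Real.log n +
              (-(((k:ℝ)+1) * t) + Ck * t^2) * ((n:ℝ) - k - 1)) := by
            rw [hnpow, ← Real.exp_add]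
        _ ≤ Real.exp ((((k:ℝ)+1)^2 + Ck) + (-(((k:ℝ)+1)) * ω n)) := Real.exp_le_exp.2 hexpo
        _ = Real.exp (((k:ℝ)+1)^2 + Ck) * Real.exp (-(((k:ℝ)+1)) * ω n) := Real.exp_add _ _
    · have h1 : Tendsto (fun n => -(((k:ℝ)+1)) * ω n) atTop atBot :=
        (tendsto_const_mul_atBot_of_neg (by linarith)).2 hω
      have h2 : Tendsto (fun n => Real.exp (-(((k:ℝ)+1)) * ω n)) atTop (nhds 0) :=
        Real.tendsto_exp_atBot.comp h1
      have h3 := h2.const_mul (Real.exp (((k:ℝ)+1)^2 + Ck))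
      rw [mul_zero] at h3
      exact h3.mono_left inf_le_left
  · -- Case 2 : √n < log n + ω n
    apply squeeze_zero'
      (g := fun n : ℕ => Real.exp ((k:ℝ)+1) *
        ((Real.sqrt n) ^ (2*(k+1)) * Real.exp (-Real.sqrt n)))
      (Eventually.of_forall fun n => hF0 n)
    · rw [Filter.eventually_inf_principal]
      filter_upwards [hω0, Filter.eventually_ge_atTop (k + 2)] with n hω0n hn2 hSn
      have hn1 : 1 ≤ n := by omega
      have hn0 : (0 : ℝ) < n := by exact_mod_cast Nat.pos_of_ne_zero (by omega)
      have hnk : ((k : ℝ) + 2) ≤ (n : ℝ) := by exact_mod_cast hn2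
      set L : ℝ := Real.log n + ω n with hLdef
      set t : ℝ := L / n with htdef
      have hlog0 : (0:ℝ) ≤ Real.log n := Real.log_nonneg (by exact_mod_cast hn1)
      have hL0 : (0:ℝ) ≤ L := by rw [hLdef]; linarith
      have ht0 : 0 ≤ t := div_nonneg hL0 hn0.le
      have hSn' : Real.sqrt n < L := not_le.1 hSn
      have htn : t * (n : ℝ) = L := div_mul_cancel₀ _ hn0.ne'
      have hplow : 2 * t ≤ p n := by
        have h := hlow n; rw [mul_div_assoc] at h; exact h
      have hphigh : p n ≤ 1 - ((k : ℝ) + 1) * t := by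
        have h := hhigh n
        rw [mul_div_assoc] at h
        convert h using 2 <;> push_cast <;> ring
      have ht4 : t ≤ 1/4 := by nlinarith [le_trans hplow hphigh]
      -- p(1-p) ≥ t
      have hpq : t ≤ p n * (1 - p n) := by
        rcases le_or_gt (p n) (1/2) with hhalf | hhalf
        · nlinarith [mul_nonneg (sub_nonneg.2 hplow) (sub_nonneg.2 (hp1 n)),
            mul_nonneg ht0 (by linarith : (0:ℝ) ≤ 1 - 2 * p n)]
        · have h1p : ((k:ℝ)+1) * t ≤ 1 - p n := by linarith
          nlinarith [mul_nonneg (by linarith : (0:ℝ) ≤ p n - 1/2)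
              (mul_nonneg (by linarith : (0:ℝ) ≤ (k:ℝ)+1) ht0),
            mul_nonneg (hp0 n) (sub_nonneg.2 h1p),
            mul_nonneg (sub_nonneg.2 hk1) ht0]
      have hbase : p n + (1 - p n) ^ (k + 1) ≤ 1 - t := by
        have h1 : (1 - p n) ^ (k + 1) ≤ (1 - p n) ^ 2 :=
          pow_le_pow_of_le_one (by linarith [hp1 n]) (by linarith [hp0 n]) (by omega)
        nlinarith
      have hg0 : 0 ≤ p n + (1 - p n) ^ (k + 1) := by
        have h2 : (0:ℝ) ≤ (1 - p n) ^ (k+1) := pow_nonneg (by linarith [hp1 n]) _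
        linarith [hp0 n]
      have he0 : (0:ℝ) ≤ (n : ℝ) - k - 1 := by linarith
      have h1t0 : (0:ℝ) ≤ 1 - t := by linarith
      have hstep1 : (p n + (1 - p n) ^ (k + 1)) ^ ((n : ℝ) - k - 1) ≤
          Real.exp ((-t) * ((n:ℝ) - k - 1)) := by
        calc (p n + (1 - p n) ^ (k + 1)) ^ ((n : ℝ) - k - 1)
            ≤ (1 - t) ^ ((n : ℝ) - k - 1) := Real.rpow_le_rpow hg0 hbase he0
          _ ≤ (Real.exp (-t)) ^ ((n : ℝ) - k - 1) := by
              apply Real.rpow_le_rpow h1t0 _ he0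
              have := Real.add_one_le_exp (-t); linarith
          _ = Real.exp ((-t) * ((n:ℝ) - k - 1)) := (Real.exp_mul _ _).symm
      have hexpo : (-t) * ((n:ℝ) - k - 1) ≤ -Real.sqrt n + ((k:ℝ)+1) := by
        have h1 : (-t) * ((n:ℝ) - k - 1) = -L + ((k:ℝ)+1) * t := by
          rw [← htn]; ring
        rw [h1]
        have h2 : ((k:ℝ)+1) * t ≤ ((k:ℝ)+1) * 1 :=
          mul_le_mul_of_nonneg_left (by linarith) (by positivity)
        rw [mul_one] at h2
        linarith
      have hnpow : ((n:ℝ))^(k+1) = (Real.sqrt n) ^ (2*(k+1)) := by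
        rw [pow_mul, Real.sq_sqrt hn0.le]
      calc (n : ℝ) ^ (k + 1) * (p n + (1 - p n) ^ (k + 1)) ^ ((n : ℝ) - k - 1)
          ≤ (n : ℝ) ^ (k + 1) * Real.exp ((-t) * ((n:ℝ) - k - 1)) :=
            mul_le_mul_of_nonneg_left hstep1 (by positivity)
        _ ≤ (n : ℝ) ^ (k + 1) * Real.exp (-Real.sqrt n + ((k:ℝ)+1)) :=
            mul_le_mul_of_nonneg_left (Real.exp_le_exp.2 hexpo) (by positivity)
        _ = Real.exp ((k:ℝ)+1) * ((Real.sqrt n) ^ (2*(k+1)) * Real.exp (-Real.sqrt n)) := by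
            rw [hnpow, Real.exp_add]; ring
    · have hsq : Tendsto (fun n : ℕ => Real.sqrt n) atTop atTop := by
        apply Filter.tendsto_atTop_atTop.2
        intro b
        refine ⟨Nat.ceil (max b 0 ^ 2), fun n hn => ?_⟩
        have h1 : (max b 0)^2 ≤ (n : ℝ) := le_trans (Nat.le_ceil _) (by exact_mod_cast hn)
        calc b ≤ max b 0 := le_max_left _ _
          _ = Real.sqrt ((max b 0)^2) := (Real.sqrt_sq (le_max_right _ _)).symm
          _ ≤ Real.sqrt n := Real.sqrt_le_sqrt h1
      have h2 : Tendsto (fun n : ℕ => (Real.sqrt n) ^ (2*(k+1)) * Real.exp (-Real.sqrt n))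
          atTop (nhds 0) := (tendsto_pow_mul_exp_neg_atTop_nhds_zero (2*(k+1))).comp hsq
      have h3 := h2.const_mul (Real.exp ((k:ℝ)+1))
      rw [mul_zero] at h3
      exact h3.mono_left inf_le_left
end

section
/- For every fixed integer k ≥ 1, the function y ↦ (y + (1−y)^{k+1})^{x−k−1}·x^{k+1} is convex in y on [0,1] for each fixed real x > k+3; more precisely, the second partial derivative of F(x,y) = x^{k+1}(y+(1−y)^{k+1})^{x−k−1} with respect to y is nonnegative for y ∈ [0,1] and x > k+3. -/
/-- For fixed integer `k ≥ 1` and fixed real `x > k+3`, the function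
`y ↦ x^(k+1) (y+(1-y)^(k+1))^(x-k-1)` is convex on `[0,1]`; more precisely, its second
derivative in `y` is nonnegative for `y ∈ [0,1]`. -/
theorem F_convex_in_y (k : ℕ) (hk : 1 ≤ k) (x : ℝ) (hx : (k : ℝ) + 3 < x) :
    ConvexOn ℝ (Set.Icc (0 : ℝ) 1)
      (fun y : ℝ => x ^ (k + 1) * (y + (1 - y) ^ (k + 1)) ^ (x - (k : ℝ) - 1)) ∧
    ∀ y ∈ Set.Icc (0 : ℝ) 1,
      0 ≤ iteratedDeriv 2
        (fun y : ℝ => x ^ (k + 1) * (y + (1 - y) ^ (k + 1)) ^ (x - (k : ℝ) - 1)) y := by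
  set p : ℝ := x - (k : ℝ) - 1 with hpdef
  have hp2 : (2 : ℝ) < p := by simp only [hpdef]; linarith
  set c : ℝ := x ^ (k + 1) with hcdef
  have hx0 : (0 : ℝ) < x := by
    have : (0:ℝ) ≤ (k:ℝ) := Nat.cast_nonneg k
    linarith
  have hc0 : 0 ≤ c := by positivity
  set g : ℝ → ℝ := fun y => y + (1 - y) ^ (k + 1) with hgdef
  set g' : ℝ → ℝ := fun y => 1 - ((k : ℝ) + 1) * (1 - y) ^ k with hg'def
  -- derivative of g
  have hg : ∀ y : ℝ, HasDerivAt g (g' y) y := by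
    intro y
    have h1 : HasDerivAt (fun y : ℝ => 1 - y) (-1) y := by
      simpa using (hasDerivAt_id y).const_sub 1
    have h2 := h1.pow (k + 1)
    have h3 := (hasDerivAt_id y).add h2
    refine h3.congr_deriv ?_
    push_cast [hg'def]
    ring
  -- derivative of g'
  have hg' : ∀ y : ℝ, HasDerivAt g' (((k : ℝ) + 1) * ((k : ℝ) * (1 - y) ^ (k - 1))) y := by
    intro y
    have h1 : HasDerivAt (fun y : ℝ => 1 - y) (-1) y := by
      simpa using (hasDerivAt_id y).const_sub 1
    have h2 := (h1.pow k).const_mul ((k : ℝ) + 1)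
    have h3 := h2.const_sub 1
    refine h3.congr_deriv ?_
    push_cast
    ring
  set f : ℝ → ℝ := fun y => c * g y ^ p with hfdef
  set φ : ℝ → ℝ := fun y => c * p * (g y ^ (p - 1) * g' y) with hφdef
  have hF : ∀ y : ℝ, HasDerivAt f (φ y) y := by
    intro y
    have h := (Real.hasDerivAt_rpow_const (x := g y) (p := p)
      (Or.inr (by linarith))).comp y (hg y)
    have h2 := h.const_mul c
    refine h2.congr_deriv ?_
    simp only [hφdef]; ring
  have hderivf : deriv f = φ := funext fun y => (hF y).deriv
  set ψ : ℝ → ℝ := fun y => c * p * ((p - 1) * g y ^ (p - 2) * g' y * g' y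
      + g y ^ (p - 1) * (((k : ℝ) + 1) * ((k : ℝ) * (1 - y) ^ (k - 1)))) with hψdef
  have hφ' : ∀ y : ℝ, HasDerivAt φ (ψ y) y := by
    intro y
    have hA : HasDerivAt (fun y => g y ^ (p - 1)) ((p - 1) * g y ^ (p - 1 - 1) * g' y) y := by
      have h := (Real.hasDerivAt_rpow_const (x := g y) (p := p - 1)
        (Or.inr (by linarith))).comp y (hg y)
      exact h
    have h2 := ((hA.mul (hg' y)).const_mul (c * p))
    refine h2.congr_deriv ?_
    simp only [hψdef]
    have hE : p - 1 - 1 = p - 2 := by ring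
    rw [hE]
  have hd2 : ∀ y : ℝ, deriv (deriv f) y = ψ y := by
    intro y
    rw [hderivf]
    exact (hφ' y).deriv
  have hnonneg : ∀ y ∈ Set.Icc (0:ℝ) 1, 0 ≤ ψ y := by
    intro y hy
    obtain ⟨hy0, hy1⟩ := hy
    have h1y : (0:ℝ) ≤ 1 - y := by linarith
    have hgy : 0 ≤ g y := by
      have h := pow_nonneg h1y (k + 1)
      have : g y = y + (1 - y) ^ (k + 1) := rfl
      rw [this]; linarith
    have hk0 : (0:ℝ) ≤ (k:ℝ) := Nat.cast_nonneg k
    simp only [hψdef]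
    have t1 : 0 ≤ (p - 1) * g y ^ (p - 2) * g' y * g' y := by
      have hE : (p - 1) * g y ^ (p - 2) * g' y * g' y
          = (p - 1) * (g y ^ (p - 2) * (g' y * g' y)) := by ring
      rw [hE]
      exact mul_nonneg (by linarith)
        (mul_nonneg (Real.rpow_nonneg hgy _) (mul_self_nonneg _))
    have t2 : 0 ≤ g y ^ (p - 1) * (((k : ℝ) + 1) * ((k : ℝ) * (1 - y) ^ (k - 1))) := by
      have := Real.rpow_nonneg hgy (p - 1)
      have := pow_nonneg h1y (k - 1)
      positivity
    have : 0 ≤ c * p := by nlinarith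
    nlinarith
  constructor
  · apply convexOn_of_deriv2_nonneg (convex_Icc 0 1)
    · exact fun y _ => (hF y).differentiableAt.continuousAt.continuousWithinAt
    · intro y hy
      exact (hF y).differentiableAt.differentiableWithinAt
    · intro y hy
      rw [hderivf]
      exact (hφ' y).differentiableAt.differentiableWithinAt
    · intro y hy
      have : deriv^[2] f y = deriv (deriv f) y := by
        rw [Function.iterate_succ, Function.iterate_one]; rfl
      rw [this, hd2]
      exact hnonneg y (interior_subset hy)
  · intro y hy
    rw [iteratedDeriv_succ, iteratedDeriv_one, hd2]
    exact hnonneg y hy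
end

section
/- In the Erdős–Rényi random graph G(n,p), for a fixed vertex a and a fixed k-element set S of vertices not containing a, the probability that (a,S) is a proper star k-separation equals (1−p)^k · [(p+(1−p)^{k+1})^{n−k−1} + (1 − p^{n−k−1})(1 − (1−p)^{k(n−k−1)}) − 1]. -/
open scoped Classical
set_option linter.unusedSectionVars false

open Finset

section Aux
variable {V : Type*} [Fintype V] [DecidableEq V]

/-- The type indexing potential edges. -/
abbrev EIdx (V : Type*) := {e : Sym2 V // ¬ e.IsDiag}

/-- Extend a Bool function on non-diagonal pairs to all pairs by `false`. -/
def extB (f : EIdx V → Bool) : Sym2 V → Bool := fun e => if h : e.IsDiag then false else f ⟨e, h⟩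

lemma extB_mk (f : EIdx V → Bool) {x y : V} (h : x ≠ y) :
    extB f s(x,y) = f ⟨s(x,y), by simp [h]⟩ := by
  simp [extB, h]

lemma extB_idx (f : EIdx V → Bool) (i : EIdx V) : extB f i.1 = f i := by
  simp [extB, i.2]

/-- The graph determined by a Bool function on non-diagonal pairs. -/
def graphOf (f : EIdx V → Bool) : SimpleGraph V := SimpleGraph.fromEdgeSet {e | extB f e}

lemma graphOf_adj (f : EIdx V → Bool) (x y : V) :
    (graphOf f).Adj x y ↔ extB f s(x,y) = true := by
  rw [graphOf, SimpleGraph.fromEdgeSet_adj]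
  constructor
  · rintro ⟨h, -⟩; exact h
  · intro h
    have hxy : x ≠ y := by
      rintro rfl
      simp [extB] at h
    exact ⟨h, hxy⟩

lemma graphOf_bijective : Function.Bijective (graphOf (V := V)) := by
  classical
  constructor
  · intro f g h
    funext i
    obtain ⟨e, hd⟩ := i
    induction e using Sym2.ind with
    | _ x y =>
      have hxy : x ≠ y := by simpa using hd
      have := (graphOf_adj f x y).symm.trans (h ▸ graphOf_adj g x y)
      rw [extB_mk f hxy, extB_mk g hxy] at this
      simpa using this
  · intro G
    refine ⟨fun i => decide (i.1 ∈ G.edgeSet), ?_⟩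
    ext x y
    rw [graphOf_adj]
    by_cases hxy : x = y
    · subst hxy; simp [extB]
    · rw [extB_mk _ hxy]
      simp [SimpleGraph.mem_edgeSet, hxy]

lemma graphOf_edgeSet (f : EIdx V → Bool) :
    (graphOf f).edgeSet = {e | extB f e = true} := by
  rw [graphOf, SimpleGraph.edgeSet_fromEdgeSet]
  ext e
  simp only [Set.mem_diff, Set.mem_setOf_eq, and_iff_left_iff_imp]
  intro h hd
  simp [extB, hd] at h
  obtain ⟨h', -⟩ := h
  exact h' hd

lemma card_edgeSet_graphOf (f : EIdx V → Bool) :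
    Nat.card (graphOf f).edgeSet = (univ.filter fun i => f i = true).card := by
  classical
  rw [graphOf_edgeSet]
  have hnd : ∀ x : {e : Sym2 V // extB f e = true}, ¬ x.1.IsDiag := by
    rintro ⟨e, he⟩ hd
    simp [extB, hd] at he
  have e : {e : Sym2 V // extB f e = true} ≃ {i : EIdx V // f i = true} :=
    { toFun := fun x => ⟨⟨x.1, hnd x⟩, by simpa [extB, hnd x] using x.2⟩
      invFun := fun i => ⟨i.1.1, by rw [extB_idx]; exact i.2⟩
      left_inv := fun x => rfl
      right_inv := fun i => rfl }
  have : Nat.card {e : Sym2 V // extB f e = true} = _ :=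
    (Nat.card_congr e).trans (by rw [Nat.card_eq_fintype_card, Fintype.card_subtype])
  exact this

end Aux

section Aux2
open Finset

lemma sum_fun_bool {I : Type*} [Fintype I] [DecidableEq I] (g : I → Bool → ℝ) :
    ∑ f : I → Bool, ∏ i, g i (f i) = ∏ i, (g i true + g i false) := by
  rw [show (∏ i, (g i true + g i false)) = ∏ i, ∑ b : Bool, g i b from
      Finset.prod_congr rfl fun i _ => (Fintype.sum_bool _).symm,
    Fintype.prod_sum g]

lemma prod_ite_zero {I : Type*} [Fintype I] (A : I → Prop) [DecidablePred A] (w : I → ℝ) :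
    (∏ i, if A i then w i else 0) = if (∀ i, A i) then ∏ i, w i else 0 := by
  by_cases h : ∀ i, A i
  · rw [if_pos h]
    exact Finset.prod_congr rfl fun i _ => if_pos (h i)
  · rw [if_neg h]
    push_neg at h
    obtain ⟨i, hi⟩ := h
    exact Finset.prod_eq_zero (mem_univ i) (if_neg hi)

lemma powerset_sum {α : Type*} [DecidableEq α] (x y : ℝ) (T : Finset α) :
    ∑ U ∈ T.powerset, x ^ U.card * y ^ (T.card - U.card) = (x + y) ^ T.card := by
  have := Finset.prod_add (fun _ : α => x) (fun _ : α => y) T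
  rw [Finset.prod_const] at this
  rw [this]
  refine Finset.sum_congr rfl fun U hU => ?_
  rw [Finset.prod_const, Finset.prod_const, Finset.card_sdiff_of_subset (Finset.mem_powerset.1 hU)]

lemma weight_eq_prod {V : Type*} [Fintype V] [DecidableEq V] (p : ℝ) (f : EIdx V → Bool) :
    p ^ ((univ.filter fun i => f i = true).card) *
      (1 - p) ^ ((Fintype.card V).choose 2 - (univ.filter fun i => f i = true).card) =
    ∏ i : EIdx V, (if f i then p else 1 - p) := by
  rw [Finset.prod_ite, Finset.prod_const, Finset.prod_const]
  have h1 : (univ.filter fun i : EIdx V => ¬ f i = true).card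
      = (Fintype.card V).choose 2 - (univ.filter fun i => f i = true).card := by
    have := Finset.card_filter_add_card_filter_not
      (s := (univ : Finset (EIdx V))) (p := fun i => f i = true)
    rw [Finset.card_univ, Sym2.card_subtype_not_diag] at this
    omega
  rw [h1]

end Aux2

section Core
open Finset
variable {V : Type*} [Fintype V] [DecidableEq V] (a : V) (S T U R : Finset V)

/-- Per-edge constraint: edges `a`–`S` are absent, edges `a`–`T` follow the pattern `U`,
edges `S`–`R` are absent. -/
def ok (i : EIdx V) (x : Bool) : Prop :=
  (∀ b ∈ S, i.1 = s(a,b) → x = false) ∧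
  (∀ c ∈ T, i.1 = s(a,c) → (x = true ↔ c ∈ U)) ∧
  (∀ b ∈ S, ∀ c ∈ R, i.1 = s(b,c) → x = false)

variable {a S T U R}
variable (haS : a ∉ S) (haT : a ∉ T) (hST : ∀ x ∈ S, x ∉ T) (hUT : U ⊆ T) (hRT : R ⊆ T)

include haS haT hST hRT in
lemma ok_val_aS {b : V} (hb : b ∈ S) (hnd : ¬ (s(a,b)).IsDiag) (x : Bool) :
    ok a S T U R ⟨s(a,b), hnd⟩ x ↔ x = false := by
  constructor
  · intro h; exact h.1 b hb rfl
  · intro hx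
    refine ⟨fun b' _ _ => hx, fun c hc heq => ?_, fun b' hb' c hc heq => ?_⟩
    · rcases Sym2.eq_iff.1 heq with ⟨-, h1⟩ | ⟨h1, -⟩
      · exact absurd (h1 ▸ hc) (hST b hb)
      · exact absurd (h1 ▸ hc) haT
    · rcases Sym2.eq_iff.1 heq with ⟨h1, -⟩ | ⟨h1, -⟩
      · exact absurd (h1 ▸ hb') haS
      · exact absurd (h1 ▸ hRT hc) haT

include haS haT hST hRT in
lemma ok_val_aT {c : V} (hc : c ∈ T) (hnd : ¬ (s(a,c)).IsDiag) (x : Bool) :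
    ok a S T U R ⟨s(a,c), hnd⟩ x ↔ (x = true ↔ c ∈ U) := by
  constructor
  · intro h; exact h.2.1 c hc rfl
  · intro hx
    refine ⟨fun b hb heq => ?_, fun c' hc' heq => ?_, fun b hb c' hc' heq => ?_⟩
    · rcases Sym2.eq_iff.1 heq with ⟨-, h1⟩ | ⟨h1, -⟩
      · exact absurd (h1.symm ▸ hc) (hST b hb)
      · exact absurd (h1 ▸ hb) haS
    · rcases Sym2.eq_iff.1 heq with ⟨-, h1⟩ | ⟨h1, -⟩
      · exact h1 ▸ hx
      · exact absurd (h1 ▸ hc') haT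
    · rcases Sym2.eq_iff.1 heq with ⟨h1, -⟩ | ⟨h1, -⟩
      · exact absurd (h1 ▸ hb) haS
      · exact absurd (h1 ▸ hRT hc') haT

include haS haT hST hRT in
lemma ok_val_SR {b c : V} (hb : b ∈ S) (hc : c ∈ R) (hnd : ¬ (s(b,c)).IsDiag) (x : Bool) :
    ok a S T U R ⟨s(b,c), hnd⟩ x ↔ x = false := by
  constructor
  · intro h; exact h.2.2 b hb c hc rfl
  · intro hx
    refine ⟨fun b' hb' heq => ?_, fun c' hc' heq => ?_, fun b' hb' c' hc' heq => ?_⟩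
    · rcases Sym2.eq_iff.1 heq with ⟨h1, -⟩ | ⟨-, h1⟩
      · exact absurd (h1 ▸ hb) haS
      · exact absurd (h1 ▸ hRT hc) haT
    · rcases Sym2.eq_iff.1 heq with ⟨h1, -⟩ | ⟨-, h1⟩
      · exact absurd (h1 ▸ hb) haS
      · exact absurd (h1 ▸ hRT hc) haT
    · rcases Sym2.eq_iff.1 heq with ⟨-, -⟩ | ⟨h1, -⟩
      · exact hx
      · exact absurd (hRT hc') (h1 ▸ hST b hb)

lemma ok_val_off {i : EIdx V}
    (h1 : ∀ b ∈ S, i.1 ≠ s(a,b)) (h2 : ∀ c ∈ T, i.1 ≠ s(a,c))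
    (h3 : ∀ b ∈ S, ∀ c ∈ R, i.1 ≠ s(b,c)) (x : Bool) : ok a S T U R i x :=
  ⟨fun b hb he => absurd he (h1 b hb), fun c hc he => absurd he (h2 c hc),
   fun b hb c hc he => absurd he (h3 b hb c hc)⟩


section Pairs
open Finset
variable {V : Type*} [Fintype V] [DecidableEq V]

/-- The finset of non-diagonal pairs with one endpoint in `A` and the other in `B`. -/
def pairsF (A B : Finset V) : Finset (EIdx V) :=
  ((A ×ˢ B).filter (fun q => q.1 ≠ q.2)).attach.image
    (fun q => ⟨s(q.1.1, q.1.2), by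
      have := (Finset.mem_filter.1 q.2).2
      simp [Sym2.mk_isDiag_iff, this]⟩)

lemma mem_pairsF {A B : Finset V} {i : EIdx V} :
    i ∈ pairsF A B ↔ ∃ x ∈ A, ∃ y ∈ B, i.1 = s(x,y) := by
  constructor
  · intro h
    obtain ⟨q, -, hq⟩ := Finset.mem_image.1 h
    have hm := Finset.mem_product.1 (Finset.mem_filter.1 q.2).1
    exact ⟨q.1.1, hm.1, q.1.2, hm.2, by rw [← hq]⟩
  · rintro ⟨x, hx, y, hy, hxy⟩
    have hne : x ≠ y := by
      intro h; subst h; exact i.2 (hxy ▸ (Sym2.mk_isDiag_iff.2 rfl))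
    have hq : (x, y) ∈ (A ×ˢ B).filter (fun q => q.1 ≠ q.2) :=
      Finset.mem_filter.2 ⟨Finset.mem_product.2 ⟨hx, hy⟩, hne⟩
    exact Finset.mem_image.2 ⟨⟨(x,y), hq⟩, Finset.mem_attach _ _, Subtype.ext hxy.symm⟩

lemma card_pairsF {A B : Finset V} (hAB : ∀ x ∈ A, x ∉ B) :
    (pairsF A B).card = A.card * B.card := by
  rw [pairsF]
  have hfil : (A ×ˢ B).filter (fun q => q.1 ≠ q.2) = A ×ˢ B := by
    refine Finset.filter_true_of_mem fun q hq => ?_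
    have hm := Finset.mem_product.1 hq
    intro h; exact hAB q.1 hm.1 (h ▸ hm.2)
  have hinj : Function.Injective
      (fun q : {q // q ∈ (A ×ˢ B).filter (fun q => q.1 ≠ q.2)} =>
        (⟨s(q.1.1, q.1.2), by
          have := (Finset.mem_filter.1 q.2).2
          simp [Sym2.mk_isDiag_iff, this]⟩ : EIdx V)) := by
    rintro ⟨⟨x, y⟩, hq⟩ ⟨⟨x', y'⟩, hq'⟩ h
    have h2 : s(x, y) = s(x', y') := congrArg Subtype.val h
    have hm := Finset.mem_product.1 (Finset.mem_filter.1 hq).1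
    have hm' := Finset.mem_product.1 (Finset.mem_filter.1 hq').1
    rcases Sym2.eq_iff.1 h2 with ⟨rfl, rfl⟩ | ⟨h3, h4⟩
    · rfl
    · exact absurd (h3 ▸ hm.1) (fun h => hAB _ h hm'.2)
  rw [Finset.card_image_of_injective _ hinj, Finset.card_attach, hfil, Finset.card_product]

lemma disj_pairsF {A B A' B' : Finset V}
    (h : ∀ x ∈ A, ∀ y ∈ B, ∀ x' ∈ A', ∀ y' ∈ B', s(x,y) ≠ s(x',y')) :
    Disjoint (pairsF A B) (pairsF A' B') := by
  rw [Finset.disjoint_left]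
  rintro i hi hi'
  obtain ⟨x, hx, y, hy, hxy⟩ := mem_pairsF.1 hi
  obtain ⟨x', hx', y', hy', hxy'⟩ := mem_pairsF.1 hi'
  exact h x hx y hy x' hx' y' hy' (hxy ▸ hxy')

end Pairs

end Core

section ProdOk
open Finset
variable {V : Type*} [Fintype V] [DecidableEq V]
variable {a : V} {S T U R : Finset V}
variable (haS : a ∉ S) (haT : a ∉ T) (hST : ∀ x ∈ S, x ∉ T) (hUT : U ⊆ T) (hRT : R ⊆ T)

include haS haT hST hUT hRT in
lemma prod_ok (p : ℝ) :
    (∏ i : EIdx V,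
      ((if ok a S T U R i true then p else 0) + (if ok a S T U R i false then 1 - p else 0)))
      = p ^ U.card * (1 - p) ^ (S.card + (T.card - U.card) + S.card * R.card) := by
  classical
  set v := fun i : EIdx V =>
    ((if ok a S T U R i true then p else 0) + (if ok a S T U R i false then 1 - p else 0))
    with hv
  have hW1 : ∀ i ∈ pairsF {a} S, v i = 1 - p := by
    intro i hi
    obtain ⟨x, hx, y, hy, hxy⟩ := mem_pairsF.1 hi
    rw [Finset.mem_singleton] at hx; subst hx
    have hieq : i = ⟨s(x,y), hxy ▸ i.2⟩ := Subtype.ext hxy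
    rw [hv]; dsimp only; rw [hieq]
    simp [ok_val_aS haS haT hST hRT hy]
  have hW2a : ∀ i ∈ pairsF {a} U, v i = p := by
    intro i hi
    obtain ⟨x, hx, y, hy, hxy⟩ := mem_pairsF.1 hi
    rw [Finset.mem_singleton] at hx; subst hx
    have hieq : i = ⟨s(x,y), hxy ▸ i.2⟩ := Subtype.ext hxy
    rw [hv]; dsimp only; rw [hieq]
    simp [ok_val_aT haS haT hST hRT (hUT hy), hy]
  have hW2b : ∀ i ∈ pairsF {a} (T \ U), v i = 1 - p := by
    intro i hi
    obtain ⟨x, hx, y, hy, hxy⟩ := mem_pairsF.1 hi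
    rw [Finset.mem_singleton] at hx; subst hx
    rw [Finset.mem_sdiff] at hy
    have hieq : i = ⟨s(x,y), hxy ▸ i.2⟩ := Subtype.ext hxy
    rw [hv]; dsimp only; rw [hieq]
    simp [ok_val_aT haS haT hST hRT hy.1, hy.2]
  have hW3 : ∀ i ∈ pairsF S R, v i = 1 - p := by
    intro i hi
    obtain ⟨x, hx, y, hy, hxy⟩ := mem_pairsF.1 hi
    have hieq : i = ⟨s(x,y), hxy ▸ i.2⟩ := Subtype.ext hxy
    rw [hv]; dsimp only; rw [hieq]
    simp [ok_val_SR haS haT hST hRT hx hy]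
  set W : Finset (EIdx V) :=
    ((pairsF {a} S ∪ pairsF {a} U) ∪ pairsF {a} (T \ U)) ∪ pairsF S R with hWdef
  have hoff : ∀ i ∈ (univ : Finset (EIdx V)), i ∉ W → v i = 1 := by
    intro i _ hiW
    rw [hWdef] at hiW
    simp only [Finset.mem_union, not_or] at hiW
    obtain ⟨⟨⟨n1, n2a⟩, n2b⟩, n3⟩ := hiW
    have h1 : ∀ b ∈ S, i.1 ≠ s(a,b) := fun b hb he =>
      n1 (mem_pairsF.2 ⟨a, Finset.mem_singleton_self a, b, hb, he⟩)
    have h2 : ∀ c ∈ T, i.1 ≠ s(a,c) := by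
      intro c hc he
      by_cases hcU : c ∈ U
      · exact n2a (mem_pairsF.2 ⟨a, Finset.mem_singleton_self a, c, hcU, he⟩)
      · exact n2b (mem_pairsF.2 ⟨a, Finset.mem_singleton_self a, c,
          Finset.mem_sdiff.2 ⟨hc, hcU⟩, he⟩)
    have h3 : ∀ b ∈ S, ∀ c ∈ R, i.1 ≠ s(b,c) := fun b hb c hc he =>
      n3 (mem_pairsF.2 ⟨b, hb, c, hc, he⟩)
    rw [hv]; dsimp only
    rw [if_pos (ok_val_off h1 h2 h3 true), if_pos (ok_val_off h1 h2 h3 false)]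
    ring
  have d1 : Disjoint (pairsF {a} S) (pairsF {a} U) := by
    refine disj_pairsF ?_
    intro x hx y hy x' hx' y' hy' he
    rw [Finset.mem_singleton] at hx hx'; subst hx; subst hx'
    rcases Sym2.eq_iff.1 he with ⟨-, h1⟩ | ⟨h1, -⟩
    · exact hST y hy (hUT (h1 ▸ hy'))
    · exact haT (hUT (h1 ▸ hy'))
  have d2 : Disjoint (pairsF {a} S) (pairsF {a} (T \ U)) := by
    refine disj_pairsF ?_
    intro x hx y hy x' hx' y' hy' he
    rw [Finset.mem_singleton] at hx hx'; subst hx; subst hx'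
    rw [Finset.mem_sdiff] at hy'
    rcases Sym2.eq_iff.1 he with ⟨-, h1⟩ | ⟨h1, -⟩
    · exact hST y hy (h1 ▸ hy'.1)
    · exact haT (h1 ▸ hy'.1)
  have d3 : ∀ B : Finset V, Disjoint (pairsF {a} B) (pairsF S R) := by
    intro B
    refine disj_pairsF ?_
    intro x hx y hy x' hx' y' hy' he
    rw [Finset.mem_singleton] at hx; subst hx
    rcases Sym2.eq_iff.1 he with ⟨h1, -⟩ | ⟨h1, -⟩
    · exact haS (h1 ▸ hx')
    · exact haT (hRT (h1 ▸ hy'))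
  have d4 : Disjoint (pairsF {a} U) (pairsF {a} (T \ U)) := by
    refine disj_pairsF ?_
    intro x hx y hy x' hx' y' hy' he
    rw [Finset.mem_singleton] at hx hx'; subst hx; subst hx'
    rw [Finset.mem_sdiff] at hy'
    rcases Sym2.eq_iff.1 he with ⟨-, h1⟩ | ⟨h1, -⟩
    · exact hy'.2 (h1 ▸ hy)
    · exact haT (h1 ▸ hy'.1)
  have hprod : ∏ i : EIdx V, v i = ∏ i ∈ W, v i :=
    (Finset.prod_subset (Finset.subset_univ W) hoff).symm
  rw [hprod, hWdef,
    Finset.prod_union (Finset.disjoint_union_left.2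
      ⟨Finset.disjoint_union_left.2 ⟨d3 S, d3 U⟩, d3 (T \ U)⟩),
    Finset.prod_union (Finset.disjoint_union_left.2 ⟨d2, d4⟩),
    Finset.prod_union d1,
    Finset.prod_congr rfl hW1, Finset.prod_congr rfl hW2a,
    Finset.prod_congr rfl hW2b, Finset.prod_congr rfl hW3,
    Finset.prod_const, Finset.prod_const, Finset.prod_const, Finset.prod_const,
    card_pairsF (fun x hx => (Finset.mem_singleton.1 hx) ▸ haS),
    card_pairsF (fun x hx => (Finset.mem_singleton.1 hx) ▸ (fun h => haT (hUT h))),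
    card_pairsF (fun x hx => (Finset.mem_singleton.1 hx) ▸
      (fun h => haT (Finset.mem_sdiff.1 h).1)),
    card_pairsF (fun x hx hxR => hST x hx (hRT hxR)),
    Finset.card_singleton, Finset.card_sdiff_of_subset hUT, one_mul, one_mul, one_mul]
  rw [pow_add, pow_add]
  ring
end ProdOk

section Equiv
open Finset
variable {V : Type*} [Fintype V] [DecidableEq V]
variable {a : V} {S T U : Finset V}

lemma ok_forall_iff (haS : a ∉ S) (haT : a ∉ T) (hST : ∀ x ∈ S, x ∉ T)
    {R : Finset V} (hRT : R ⊆ T) (f : EIdx V → Bool) :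
    (∀ i, ok a S T U R i (f i)) ↔
      ((∀ b ∈ S, extB f s(a,b) = false) ∧
       (∀ c ∈ T, (extB f s(a,c) = true ↔ c ∈ U)) ∧
       (∀ b ∈ S, ∀ c ∈ R, extB f s(b,c) = false)) := by
  constructor
  · intro h
    refine ⟨fun b hb => ?_, fun c hc => ?_, fun b hb c hc => ?_⟩
    · have hab : a ≠ b := fun he => haS (he ▸ hb)
      rw [extB_mk f hab]
      exact (h _).1 b hb rfl
    · have hac : a ≠ c := fun he => haT (he ▸ hc)
      rw [extB_mk f hac]
      exact (h _).2.1 c hc rfl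
    · have hbc : b ≠ c := fun he => hST b hb (he ▸ hRT hc)
      rw [extB_mk f hbc]
      exact (h _).2.2 b hb c hc rfl
  · rintro ⟨h1, h2, h3⟩ i
    refine ⟨fun b hb he => ?_, fun c hc he => ?_, fun b hb c hc he => ?_⟩
    · rw [← extB_idx f i, he]; exact h1 b hb
    · rw [← extB_idx f i, he]; exact h2 c hc
    · rw [← extB_idx f i, he]; exact h3 b hb c hc

lemma cond_equiv (E : Sym2 V → Bool) (haS : a ∉ S) (hT : T = (insert a S)ᶜ)
    (hUT : U ⊆ T) :
    (T.filter (fun c => E s(a,c) = true) = U ∧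
      ((∀ b ∈ S, ¬ (E s(a,b) = true)) ∧
       (∀ b ∈ S, ∀ c, c ≠ a → ¬ (E s(a,c) = true) → c ∉ S → ¬ (E s(b,c) = true)) ∧
       (∃ c, c ∉ S ∧ c ≠ a ∧ ¬ (E s(a,c) = true)) ∧
       (∃ b ∈ S, ∃ c, c ∉ S ∧ E s(b,c) = true)))
    ↔ (U ≠ T ∧
        ((∀ b ∈ S, E s(a,b) = false) ∧
         (∀ c ∈ T, (E s(a,c) = true ↔ c ∈ U)) ∧
         (∀ b ∈ S, ∀ c ∈ T \ U, E s(b,c) = false)) ∧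
        (∃ b ∈ S, ∃ c ∈ U, E s(b,c) = true)) := by
  have hmemT : ∀ c, c ∈ T ↔ (c ≠ a ∧ c ∉ S) := by
    intro c; subst hT; simp [Finset.mem_insert, not_or]
  have haT : a ∉ T := fun h => ((hmemT a).1 h).1 rfl
  have hST : ∀ x ∈ S, x ∉ T := fun x hx h => ((hmemT x).1 h).2 hx
  constructor
  · rintro ⟨hpat, hP1, hP2, hP3, hP4⟩
    have hQ : ∀ c ∈ T, (E s(a,c) = true ↔ c ∈ U) := by
      intro c hc
      rw [← hpat, Finset.mem_filter]
      exact ⟨fun h => ⟨hc, h⟩, fun h => h.2⟩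
    have hP2' : ∀ b ∈ S, ∀ c ∈ T \ U, E s(b,c) = false := by
      intro b hb c hc
      rw [Finset.mem_sdiff] at hc
      obtain ⟨hcT, hcU⟩ := hc
      obtain ⟨hca, hcS⟩ := (hmemT c).1 hcT
      have : ¬ (E s(a,c) = true) := fun h => hcU ((hQ c hcT).1 h)
      simpa using hP2 b hb c hca this hcS
    refine ⟨?_, ⟨fun b hb => by simpa using hP1 b hb, hQ, hP2'⟩, ?_⟩
    · obtain ⟨c, hcS, hca, hcE⟩ := hP3
      have hcT : c ∈ T := (hmemT c).2 ⟨hca, hcS⟩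
      have hcU : c ∉ U := fun h => hcE ((hQ c hcT).2 h)
      intro h; exact hcU (h ▸ hcT)
    · obtain ⟨b, hb, c, hcS, hE⟩ := hP4
      have hca : c ≠ a := by
        rintro rfl
        rw [Sym2.eq_swap] at hE
        exact hP1 b hb hE
      have hcT : c ∈ T := (hmemT c).2 ⟨hca, hcS⟩
      have hcU : c ∈ U := by
        by_contra hcU
        have := hP2' b hb c (Finset.mem_sdiff.2 ⟨hcT, hcU⟩)
        rw [this] at hE; exact Bool.false_ne_true hE
      exact ⟨b, hb, c, hcU, hE⟩
  · rintro ⟨hUne, ⟨hP1, hQ, hP2'⟩, b, hb, c, hcU, hE⟩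
    have hpat : T.filter (fun c => E s(a,c) = true) = U := by
      ext c
      rw [Finset.mem_filter]
      constructor
      · rintro ⟨hcT, hcE⟩; exact (hQ c hcT).1 hcE
      · intro hcU'; exact ⟨hUT hcU', (hQ c (hUT hcU')).2 hcU'⟩
    refine ⟨hpat, fun b' hb' => by simp [hP1 b' hb'], ?_, ?_, ?_⟩
    · intro b' hb' c' hca' hcE' hcS'
      have hcT' : c' ∈ T := (hmemT c').2 ⟨hca', hcS'⟩
      have hcU' : c' ∉ U := fun h => hcE' ((hQ c' hcT').2 h)
      simp [hP2' b' hb' c' (Finset.mem_sdiff.2 ⟨hcT', hcU'⟩)]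
    · have hss : U ⊂ T := Finset.ssubset_iff_subset_ne.2 ⟨hUT, hUne⟩
      obtain ⟨c', hcT', hcU'⟩ := Finset.exists_of_ssubset hss
      obtain ⟨hca', hcS'⟩ := (hmemT c').1 hcT'
      exact ⟨c', hcS', hca', fun h => hcU' ((hQ c' hcT').1 h)⟩
    · exact ⟨b, hb, c, fun h => hST c h (hUT hcU), hE⟩

lemma okN_split (haS : a ∉ S) (haT : a ∉ T) (hST : ∀ x ∈ S, x ∉ T)
    (hUT : U ⊆ T) (f : EIdx V → Bool) :
    ((∀ i, ok a S T U (T \ U) i (f i)) ∧ (∀ b ∈ S, ∀ c ∈ U, extB f s(b,c) = false))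
      ↔ (∀ i, ok a S T U T i (f i)) := by
  rw [ok_forall_iff haS haT hST Finset.sdiff_subset f,
    ok_forall_iff haS haT hST (le_refl T) f]
  constructor
  · rintro ⟨⟨h1, h2, h3⟩, h4⟩
    refine ⟨h1, h2, fun b hb c hc => ?_⟩
    by_cases hcU : c ∈ U
    · exact h4 b hb c hcU
    · exact h3 b hb c (Finset.mem_sdiff.2 ⟨hc, hcU⟩)
  · rintro ⟨h1, h2, h3⟩
    exact ⟨⟨h1, h2, fun b hb c hc => h3 b hb c (Finset.mem_sdiff.1 hc).1⟩,
      fun b hb c hc => h3 b hb c (hUT hc)⟩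

end Equiv



open scoped Classical in
/-- In `G(n,p)`, for a fixed vertex `a` and a fixed `k`-element set `S` of vertices not
containing `a` (with `1 ≤ k ≤ n-2`), the probability that `(a,S)` is a proper star
`k`-separation equals
`(1-p)^k * ((p+(1-p)^(k+1))^(n-k-1) + (1-p^(n-k-1))(1-(1-p)^(k(n-k-1))) - 1)`. -/
theorem prob_proper_star_separation {n k : ℕ} (hk : 1 ≤ k) (hkn : k ≤ n - 2)
    {p : ℝ} (hp0 : 0 ≤ p) (hp1 : p ≤ 1)
    (a : Fin n) (S : Finset (Fin n)) (haS : a ∉ S) (hcard : S.card = k) :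
    ∑ G : SimpleGraph (Fin n),
        (if ((∀ b ∈ S, ¬ G.Adj a b) ∧
              (∀ b ∈ S, ∀ c, c ≠ a → ¬ G.Adj a c → c ∉ S → ¬ G.Adj b c) ∧
              (∃ c, c ∉ S ∧ c ≠ a ∧ ¬ G.Adj a c) ∧
              (∃ b ∈ S, ∃ c, c ∉ S ∧ G.Adj b c)) then
          p ^ (Nat.card G.edgeSet) * (1 - p) ^ (n.choose 2 - Nat.card G.edgeSet)
        else 0)
      = (1 - p) ^ k *
          ((p + (1 - p) ^ (k + 1)) ^ (n - k - 1) +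
            (1 - p ^ (n - k - 1)) * (1 - (1 - p) ^ (k * (n - k - 1))) - 1) := by
  classical
  have hn : k + 2 ≤ n := by omega
  set T : Finset (Fin n) := (insert a S)ᶜ with hT
  have haT : a ∉ T := by simp [hT]
  have hST : ∀ x ∈ S, x ∉ T := by intro x hx; simp [hT, hx]
  have hTcard : T.card = n - k - 1 := by
    rw [hT, Finset.card_compl, Finset.card_insert_of_notMem haS, hcard, Fintype.card_fin]
    omega
  rw [← (graphOf_bijective (V := Fin n)).sum_comp]
  have hw : ∀ f : EIdx (Fin n) → Bool,
      p ^ ((Finset.univ.filter fun i => f i = true).card) *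
        (1 - p) ^ (n.choose 2 - (Finset.univ.filter fun i => f i = true).card) =
      ∏ i : EIdx (Fin n), (if f i then p else 1 - p) := by
    intro f
    have := weight_eq_prod (V := Fin n) p f
    rwa [Fintype.card_fin] at this
  simp only [graphOf_adj, card_edgeSet_graphOf, hw]
  rw [← Finset.sum_fiberwise_of_maps_to
    (g := fun f : EIdx (Fin n) → Bool => T.filter (fun c => extB f s(a,c) = true))
    (t := T.powerset) (fun f _ => Finset.mem_powerset.2 (Finset.filter_subset _ _))]
  have hinner : ∀ U ∈ T.powerset,
      (∑ f ∈ Finset.univ.filter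
          (fun f : EIdx (Fin n) → Bool => T.filter (fun c => extB f s(a,c) = true) = U),
        (if ((∀ b ∈ S, ¬ extB f s(a,b) = true) ∧
              (∀ b ∈ S, ∀ c, c ≠ a → ¬ extB f s(a,c) = true → c ∉ S →
                ¬ extB f s(b,c) = true) ∧
              (∃ c, c ∉ S ∧ c ≠ a ∧ ¬ extB f s(a,c) = true) ∧
              (∃ b ∈ S, ∃ c, c ∉ S ∧ extB f s(b,c) = true)) then
          ∏ i : EIdx (Fin n), (if f i then p else 1 - p)
        else 0))
      = if U = T then 0 else
          (p ^ U.card * (1-p) ^ (k + (T.card - U.card) + k * (T.card - U.card)) -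
           p ^ U.card * (1-p) ^ (k + (T.card - U.card) + k * T.card)) := by
    intro U hU
    have hUT : U ⊆ T := Finset.mem_powerset.1 hU
    have hsum : ∀ R : Finset (Fin n), R ⊆ T →
        (∑ f : EIdx (Fin n) → Bool,
          if (∀ i, ok a S T U R i (f i)) then ∏ i, (if f i then p else 1 - p) else 0)
        = p ^ U.card * (1-p) ^ (k + (T.card - U.card) + k * R.card) := by
      intro R hRT
      rw [Finset.sum_congr rfl (fun f _ =>
        (prod_ite_zero (fun i => ok a S T U R i (f i)) (fun i => if f i then p else 1 - p)).symm)]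
      rw [sum_fun_bool (g := fun i x => if ok a S T U R i x then (if x then p else 1 - p) else 0)]
      have hval : ∀ i : EIdx (Fin n),
          ((if ok a S T U R i true then (if (true : Bool) then p else 1-p) else 0) +
           (if ok a S T U R i false then (if (false : Bool) then p else 1-p) else 0))
          = ((if ok a S T U R i true then p else 0) +
             (if ok a S T U R i false then 1 - p else 0)) := by
        intro i; norm_num
      rw [Finset.prod_congr rfl (fun i _ => hval i), prod_ok haS haT hST hUT hRT p, hcard]
    rw [Finset.sum_filter]
    simp only [← ite_and]
    simp only [cond_equiv _ haS hT hUT]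
    by_cases hUeq : U = T
    · simp [hUeq]
    · rw [if_neg hUeq]
      simp only [and_iff_right (hUeq : U ≠ T)]
      simp only [← ok_forall_iff haS haT hST Finset.sdiff_subset]
      have hsplit : ∀ f : EIdx (Fin n) → Bool,
          (if ((∀ i, ok a S T U (T \ U) i (f i)) ∧ (∃ b ∈ S, ∃ c ∈ U, extB f s(b,c) = true)) then
              ∏ i : EIdx (Fin n), (if f i then p else 1 - p) else 0)
          = (if (∀ i, ok a S T U (T \ U) i (f i)) then
              ∏ i : EIdx (Fin n), (if f i then p else 1 - p) else 0)
            - (if (∀ i, ok a S T U T i (f i)) then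
              ∏ i : EIdx (Fin n), (if f i then p else 1 - p) else 0) := by
        intro f
        by_cases hD : ∀ i, ok a S T U (T \ U) i (f i)
        · by_cases hP : ∃ b ∈ S, ∃ c ∈ U, extB f s(b,c) = true
          · rw [if_pos ⟨hD, hP⟩, if_pos hD, if_neg, sub_zero]
            intro hN
            obtain ⟨b, hb, c, hc, hE⟩ := hP
            have := ((okN_split haS haT hST hUT f).2 hN).2 b hb c hc
            rw [this] at hE; exact Bool.false_ne_true hE
          · rw [if_neg (fun h => hP h.2), if_pos hD, if_pos, sub_self]
            refine (okN_split haS haT hST hUT f).1 ⟨hD, ?_⟩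
            intro b hb c hc
            by_contra hne
            exact hP ⟨b, hb, c, hc, by simpa using hne⟩
        · rw [if_neg (fun h => hD h.1), if_neg hD, if_neg, sub_zero]
          intro hN
          exact hD ((okN_split haS haT hST hUT f).2 hN).1
      rw [Finset.sum_congr rfl (fun f _ => hsplit f), Finset.sum_sub_distrib,
        hsum (T \ U) Finset.sdiff_subset, hsum T le_rfl,
        Finset.card_sdiff_of_subset hUT]
  rw [Finset.sum_congr rfl hinner]
  have h2 : ∀ U ∈ T.powerset,
      (if U = T then 0 else
        (p ^ U.card * (1-p) ^ (k + (T.card - U.card) + k * (T.card - U.card)) -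
         p ^ U.card * (1-p) ^ (k + (T.card - U.card) + k * T.card)))
      = (p ^ U.card * (1-p) ^ (k + (T.card - U.card) + k * (T.card - U.card)) -
         p ^ U.card * (1-p) ^ (k + (T.card - U.card) + k * T.card))
        - (if U = T then
            (p ^ U.card * (1-p) ^ (k + (T.card - U.card) + k * (T.card - U.card)) -
             p ^ U.card * (1-p) ^ (k + (T.card - U.card) + k * T.card)) else 0) := by
    intro U _
    split_ifs with h <;> ring
  rw [Finset.sum_congr rfl h2, Finset.sum_sub_distrib,
    Finset.sum_ite_eq' T.powerset T, if_pos (Finset.mem_powerset.2 le_rfl),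
    Finset.sum_sub_distrib]
  have hA : ∀ U ∈ T.powerset,
      p ^ U.card * (1-p) ^ (k + (T.card - U.card) + k * (T.card - U.card))
      = (1-p) ^ k * (p ^ U.card * ((1-p) ^ (k+1)) ^ (T.card - U.card)) := by
    intro U _
    rw [show k + (T.card - U.card) + k * (T.card - U.card)
        = k + (k+1) * (T.card - U.card) by ring, pow_add, pow_mul]
    ring
  have hN : ∀ U ∈ T.powerset,
      p ^ U.card * (1-p) ^ (k + (T.card - U.card) + k * T.card)
      = ((1-p) ^ k * (1-p) ^ (k * T.card)) * (p ^ U.card * (1-p) ^ (T.card - U.card)) := by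
    intro U _
    rw [show k + (T.card - U.card) + k * T.card
        = k + k * T.card + (T.card - U.card) by ring, pow_add, pow_add]
    ring
  rw [Finset.sum_congr rfl hA, Finset.sum_congr rfl hN, ← Finset.mul_sum, ← Finset.mul_sum,
    powerset_sum, powerset_sum, Nat.sub_self,
    show p + (1 - p) = 1 by ring, one_pow, mul_one]
  simp only [hTcard, Nat.mul_zero, Nat.add_zero]
  rw [pow_add (1-p) k (k * (n - k - 1))]
  ring
end

section
/- If a finite simple graph Γ is star 2-connected (has no star-cut-vertices), then either Γ is connected or Γ is the disjoint union of exactly two complete graphs. -/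
/-- If a finite simple graph is star 2-connected (no vertex `a` such that the induced
subgraph on the complement of `st(a)` is disconnected), then either it is connected, or
it is the disjoint union of exactly two complete graphs. -/
theorem star_two_connected_structure {V : Type*} [Fintype V] [Nonempty V]
    (G : SimpleGraph V)
    (hstar : ∀ a : V, (G.induce {v : V | ¬ (v = a ∨ G.Adj a v)}).Preconnected) :
    G.Connected ∨
      ∃ A B : Set V, A ∪ B = Set.univ ∧ A ∩ B = ∅ ∧ A.Nonempty ∧ B.Nonempty ∧
        (∀ x ∈ A, ∀ y ∈ A, x ≠ y → G.Adj x y) ∧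
        (∀ x ∈ B, ∀ y ∈ B, x ≠ y → G.Adj x y) ∧
        (∀ x ∈ A, ∀ y ∈ B, ¬ G.Adj x y) := by
  by_cases hc : G.Connected
  · exact Or.inl hc
  right
  have hpre : ¬ G.Preconnected := fun h => hc (SimpleGraph.Connected.mk h)
  simp only [SimpleGraph.Preconnected] at hpre
  push_neg at hpre
  obtain ⟨a, b, hab⟩ := hpre
  have key : ∀ x u v : V, ¬(u = x ∨ G.Adj x u) → ¬(v = x ∨ G.Adj x v) →
      G.Reachable u v := by
    intro x u v hu hv
    have h := hstar x ⟨u, hu⟩ ⟨v, hv⟩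
    exact h.map (SimpleGraph.Embedding.induce _).toHom
  have step : ∀ x y : V, ¬ G.Reachable x y → ∀ v, G.Reachable x v →
      v = x ∨ G.Adj x v := by
    intro x y hxy v hv
    by_contra hcon
    have hy : ¬(y = x ∨ G.Adj x y) := by
      rintro (rfl | h)
      · exact hxy (SimpleGraph.Reachable.refl _)
      · exact hxy h.reachable
    exact hxy (hv.trans (key x v y hcon hy))
  refine ⟨{v | G.Reachable a v}, {v | ¬ G.Reachable a v}, ?_, ?_,
    ⟨a, SimpleGraph.Reachable.refl a⟩, ⟨b, hab⟩, ?_, ?_, ?_⟩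
  · ext v; simp [em]
  · ext v; simp
  · intro x hx y hy hne
    have hxb : ¬ G.Reachable x b := fun h => hab (hx.trans h)
    rcases step x b hxb y (hx.symm.trans hy) with rfl | h
    · exact absurd rfl hne.symm
    · exact h
  · intro x hx y hy hne
    have hx' : ¬(x = a ∨ G.Adj a x) := by
      rintro (rfl | h)
      · exact hx (SimpleGraph.Reachable.refl _)
      · exact hx h.reachable
    have hy' : ¬(y = a ∨ G.Adj a y) := by
      rintro (rfl | h)
      · exact hy (SimpleGraph.Reachable.refl _)
      · exact hy h.reachable
    have hr : G.Reachable x y := key a x y hx' hy'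
    have hxa : ¬ G.Reachable x a := fun h => hx h.symm
    rcases step x a hxa y hr with rfl | h
    · exact absurd rfl hne.symm
    · exact h
  · intro x hx y hy hadj
    exact hy (hx.trans hadj.reachable)
end
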